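/- In the lower-bound construction of an acyclic agreement forest from OLA vectors, the sets L_0, L_1, ..., L_k (one per mismatched index plus L_0) partition the full leaf set, and for each i, the nodes of the restricted tree T|_{L_i} (excluding the planted root ρ) are bijectively indexed by span(L_i), identically across all trees T in the collection. -/

import Mathlib

open scoped Classical

namespace OLA

/-- Rooted binary phylogenetic trees with `ℕ`-labeled leaves. -/
inductive BTree where
  | leaf (x : ℕ)
  | node (l r : BTree)
deriving DecidableEq

namespace BTree

def leafList : BTree → List ℕ
  | .leaf x => [x]
  | .node l r => leafList l ++ leafList r

def leafSet (t : BTree) : Finset ℕ := t.leafList.toFinset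

/-- `t` is a phylogenetic tree on the leaf set `{0, …, n-1}`. -/
def IsPhylo (t : BTree) (n : ℕ) : Prop :=
  t.leafList.Nodup ∧ t.leafSet = Finset.range n

def minLeaf : BTree → ℕ
  | .leaf x => x
  | .node l r => min (minLeaf l) (minLeaf r)

/-- OLA index of the root of a (sub)tree: leaf label, or minus the second
smallest of the minimal leaves of the two children. -/
def idx : BTree → ℤ
  | .leaf x => (x : ℤ)
  | .node l r => -(max (minLeaf l) (minLeaf r) : ℤ)

/-- Restriction `T^i` of `t` to the leaves labeled `≤ i` (suppressing
degree-2 nodes); `none` if no such leaf exists. -/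
def restrictLe : BTree → ℕ → Option BTree
  | .leaf x, i => if x ≤ i then some (.leaf x) else none
  | .node l r, i =>
    match restrictLe l i, restrictLe r i with
    | some l', some r' => some (.node l' r')
    | some l', none => some l'
    | none, some r' => some r'
    | none, none => none

/-- Restriction `T|_S` of `t` to the leaves in `S` (suppressing degree-2 nodes). -/
def restrictTo : BTree → Finset ℕ → Option BTree
  | .leaf x, S => if x ∈ S then some (.leaf x) else none
  | .node l r, S =>
    match restrictTo l S, restrictTo r S with
    | some l', some r' => some (.node l' r')
    | some l', none => some l'
    | none, some r' => some r'
    | none, none => none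

/-- OLA index of the sibling of the leaf labeled `i`, if it exists. -/
def siblingIdx : BTree → ℕ → Option ℤ
  | .leaf _, _ => none
  | .node l r, i =>
    if l = .leaf i then some r.idx
    else if r = .leaf i then some l.idx
    else (siblingIdx l i).orElse (fun _ => siblingIdx r i)

/-- The OLA vector entry of `t` at position `i ≥ 1`: the index of the sibling
of leaf `i` in the restriction of `t` to leaves `0, …, i`. -/
def olaEntry (t : BTree) (i : ℕ) : ℤ :=
  ((t.restrictLe i).bind (fun t' => t'.siblingIdx i)).getD 0

def relabel (f : ℕ → ℕ) : BTree → BTree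
  | .leaf x => .leaf (f x)
  | .node l r => .node (relabel f l) (relabel f r)

/-- The set of clusters (leaf sets of rooted subtrees) of `t`.  Two leaf-labeled
trees over the same leaf set are isomorphic iff their cluster sets coincide. -/
def clusters : BTree → Set (Set ℕ)
  | .leaf x => {{x}}
  | .node l r => insert {y | y ∈ (node l r).leafList} (clusters l ∪ clusters r)

def subtreeAt : BTree → List Bool → Option BTree
  | t, [] => some t
  | .leaf _, _ :: _ => none
  | .node l _, false :: p => subtreeAt l p
  | .node _ r, true :: p => subtreeAt r p

/-- `w` occurs as a rooted subtree (i.e. the subtree below a node) of `t`. -/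
def IsNode (t w : BTree) : Prop := ∃ p, t.subtreeAt p = some w

/-- The position of the least common ancestor of the leaves in `S`. -/
def lcaPos : BTree → Finset ℕ → List Bool
  | .leaf _, _ => []
  | .node l r, S =>
    if S ⊆ l.leafSet then false :: lcaPos l S
    else if S ⊆ r.leafSet then true :: lcaPos r S
    else []

/-- Positions of the nodes of the minimal spanning subtree `T(S)`. -/
def spanNodes (t : BTree) (S : Finset ℕ) : Set (List Bool) :=
  {p | t.lcaPos S <+: p ∧ ∃ u, t.subtreeAt p = some u ∧ ∃ x ∈ S, x ∈ u.leafList}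

end BTree

/-- OLA vector of tree `t` under the leaf ordering `σ` (leaf `x` is the
`σ x`-th leaf in the order). -/
def ola (t : BTree) (σ : Equiv.Perm ℕ) (i : ℕ) : ℤ :=
  (t.relabel σ).olaEntry i

/-- `σ` is a valid leaf ordering of the leaf set `{0, …, n-1}`. -/
def IsOrdering (σ : Equiv.Perm ℕ) (n : ℕ) : Prop := ∀ x < n, σ x < n

/-- The set of (corrected) mismatched indices among `{1, …, i}` of a family of
OLA vectors: an index is mismatched if two of the vectors differ there, or if
all vectors place that leaf above the internal node created by an
already-mismatched leaf. -/
noncomputable def mismatch {ι : Type*} (v : ι → ℕ → ℤ) : ℕ → Finset ℕ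
  | 0 => ∅
  | i + 1 =>
    let M := mismatch v i
    if (∃ a b : ι, v a (i+1) ≠ v b (i+1)) ∨ (∃ j ∈ M, ∀ a : ι, v a (i+1) = -(j : ℤ))
    then insert (i+1) M else M

/-- Corrected OLA distance of a family of OLA vectors of trees on `n` leaves. -/
noncomputable def corrDist {ι : Type*} (v : ι → ℕ → ℤ) (n : ℕ) : ℕ :=
  (mismatch v (n-1)).card

/-- Hamming OLA distance: the number of indices where at least two vectors differ. -/
noncomputable def hamDist {ι : Type*} (v : ι → ℕ → ℤ) (n : ℕ) : ℕ :=
  ((Finset.Icc 1 (n-1)).filter fun i => ∃ a b : ι, v a i ≠ v b i).card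

/-- `comp` is an agreement forest for the trees `ts` over leaf set `{0,…,n-1}`:
components have pairwise disjoint leaf sets partitioning the full leaf set,
each tree restricted to a component's leaves is isomorphic to the component,
and the spanning subtrees are node-disjoint in each tree. -/
def IsAF {ι : Type*} (ts : ι → BTree) (n : ℕ) {f : ℕ} (comp : Fin f → BTree) : Prop :=
  (∀ i, (comp i).leafList.Nodup) ∧
  (∀ i j, i ≠ j → Disjoint (comp i).leafSet (comp j).leafSet) ∧
  (Finset.univ.biUnion (fun i => (comp i).leafSet) = Finset.range n) ∧
  (∀ a i, ∃ c, (ts a).restrictTo (comp i).leafSet = some c ∧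
      c.clusters = (comp i).clusters) ∧
  (∀ a i j, i ≠ j →
      Disjoint (BTree.spanNodes (ts a) ((comp i).leafSet))
               (BTree.spanNodes (ts a) ((comp j).leafSet)))

/-- Edge of the inheritance graph: some tree has a directed path from the root
of the spanning subtree of component `i` down to that of component `j`. -/
def inhEdge {ι : Type*} (ts : ι → BTree) {f : ℕ} (comp : Fin f → BTree)
    (i j : Fin f) : Prop :=
  i ≠ j ∧ ∃ a, (BTree.lcaPos (ts a) ((comp i).leafSet)) <+:
      (BTree.lcaPos (ts a) ((comp j).leafSet))

/-- `comp` is an acyclic agreement forest for `ts`. -/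
def IsAAF {ι : Type*} (ts : ι → BTree) (n : ℕ) {f : ℕ} (comp : Fin f → BTree) : Prop :=
  IsAF ts n comp ∧ ∀ i, ¬ Relation.TransGen (inhEdge ts comp) i i

/-- Size of a maximum acyclic agreement forest (an AAF with fewest components). -/
noncomputable def maafSize {ι : Type*} (ts : ι → BTree) (n : ℕ) : ℕ :=
  sInf {f | ∃ comp : Fin f → BTree, IsAAF ts n comp}

end OLA
namespace OLA

/-- The index of the component `L_i` to which the leaf at position `j` belongs,
in the construction of an AAF from OLA vectors with mismatch set `M` and
consensus vector `v`: each mismatched position starts a new component, and a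
consensus position joins the component of the node it is placed above. -/
noncomputable def belongs (M : Finset ℕ) (v : ℕ → ℤ) : ℕ → ℕ
  | j =>
    if j ∈ M then (M.filter (· ≤ j)).card
    else if h : (v j).natAbs < j then belongs M v (v j).natAbs else 0
  termination_by j => j

/-- The `i`-th mismatched position (`m_0 = 0`). -/
noncomputable def mVal (M : Finset ℕ) (i : ℕ) : ℕ :=
  if i = 0 then 0 else (M.sort (· ≤ ·)).getD (i - 1) 0

namespace BTree

lemma leafList_ne_nil : ∀ t : BTree, t.leafList ≠ []
  | .leaf x => by simp [leafList]
  | .node l r => by simp [leafList, leafList_ne_nil l]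

lemma minLeaf_mem : ∀ t : BTree, t.minLeaf ∈ t.leafList
  | .leaf x => by simp [minLeaf, leafList]
  | .node l r => by
    simp only [minLeaf, leafList, List.mem_append]
    rcases min_cases l.minLeaf r.minLeaf with ⟨h, _⟩ | ⟨h, _⟩ <;> rw [h]
    · exact Or.inl (minLeaf_mem l)
    · exact Or.inr (minLeaf_mem r)

lemma minLeaf_le : ∀ t : BTree, ∀ y ∈ t.leafList, t.minLeaf ≤ y
  | .leaf x => by simp [minLeaf, leafList]
  | .node l r => by
    simp only [minLeaf, leafList, List.mem_append]
    rintro y (hy | hy)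
    · exact le_trans (min_le_left _ _) (minLeaf_le l y hy)
    · exact le_trans (min_le_right _ _) (minLeaf_le r y hy)

lemma natAbs_idx_mem : ∀ t : BTree, t.idx.natAbs ∈ t.leafList
  | .leaf x => by simp [idx, leafList]
  | .node l r => by
    simp only [idx, leafList, List.mem_append, ← Nat.cast_max, Int.natAbs_neg,
      Int.natAbs_natCast]
    rcases max_cases l.minLeaf r.minLeaf with ⟨h, _⟩ | ⟨h, _⟩ <;> rw [h]
    · exact Or.inl (minLeaf_mem l)
    · exact Or.inr (minLeaf_mem r)

lemma nodup_disjoint {l r : BTree} (h : (BTree.node l r).leafList.Nodup) :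
    ∀ y, y ∈ l.leafList → y ∈ r.leafList → False := by
  rw [leafList, List.nodup_append] at h
  exact fun y hy hy' => h.2.2 y hy y hy' rfl

lemma minLeaf_lt_max {l r : BTree} (h : (BTree.node l r).leafList.Nodup) :
    min l.minLeaf r.minLeaf < max l.minLeaf r.minLeaf := by
  have hne : l.minLeaf ≠ r.minLeaf := fun he =>
    nodup_disjoint h _ (minLeaf_mem l) (he ▸ minLeaf_mem r)
  exact min_lt_max.2 hne

lemma idx_node_neg {l r : BTree} (h : (BTree.node l r).leafList.Nodup) :
    (BTree.node l r).idx < 0 := by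
  have h1 : 0 < max l.minLeaf r.minLeaf :=
    lt_of_le_of_lt (Nat.zero_le _) (minLeaf_lt_max h)
  simp only [idx, Left.neg_neg_iff]
  exact_mod_cast h1

lemma minLeaf_node (l r : BTree) : (BTree.node l r).minLeaf = min l.minLeaf r.minLeaf := rfl

lemma idx_node (l r : BTree) :
    (BTree.node l r).idx = -(((max l.minLeaf r.minLeaf : ℕ) : ℤ)) := by
  simp [idx, Nat.cast_max]

lemma subtreeAt_nil (t : BTree) : t.subtreeAt [] = some t := by cases t <;> rfl

lemma subtreeAt_infix : ∀ (t : BTree) (p : List Bool) (u : BTree),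
    t.subtreeAt p = some u → u.leafList <:+: t.leafList
  | t, [], u => by
    simp only [subtreeAt, Option.some.injEq]
    rintro rfl; exact List.infix_refl _
  | .leaf x, _ :: _, u => by simp [subtreeAt]
  | .node l r, false :: p, u => fun h =>
    (subtreeAt_infix l p u h).trans ((l.leafList.prefix_append r.leafList).isInfix)
  | .node l r, true :: p, u => fun h =>
    (subtreeAt_infix r p u h).trans ((l.leafList.suffix_append r.leafList).isInfix)

lemma mem_of_subtreeAt {t : BTree} {p : List Bool} {u : BTree} (h : t.subtreeAt p = some u)
    {y : ℕ} (hy : y ∈ u.leafList) : y ∈ t.leafList :=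
  (subtreeAt_infix t p u h).subset hy

lemma nodup_of_subtreeAt {t : BTree} {p : List Bool} {u : BTree} (h : t.subtreeAt p = some u)
    (hn : t.leafList.Nodup) : u.leafList.Nodup :=
  hn.sublist (subtreeAt_infix t p u h).sublist

lemma subtreeAt_append : ∀ (t : BTree) (p q : List Bool),
    t.subtreeAt (p ++ q) = (t.subtreeAt p).bind (fun u => u.subtreeAt q)
  | t, [], q => by simp [subtreeAt]
  | .leaf x, _ :: _, q => by simp [subtreeAt]
  | .node l r, false :: p, q => by simp [subtreeAt, subtreeAt_append l p q]
  | .node l r, true :: p, q => by simp [subtreeAt, subtreeAt_append r p q]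

lemma mem_clusters_iff : ∀ (t : BTree) (C : Set ℕ),
    C ∈ t.clusters ↔ ∃ p u, t.subtreeAt p = some u ∧ C = {y | y ∈ u.leafList}
  | .leaf x, C => by
    constructor
    · intro hC
      refine ⟨[], .leaf x, rfl, ?_⟩
      simp only [clusters, Set.mem_singleton_iff] at hC
      subst hC; ext y; simp [leafList]
    · rintro ⟨p, u, hu, rfl⟩
      cases p with
      | nil => simp only [subtreeAt, Option.some.injEq] at hu; subst hu; simp [clusters, leafList]
      | cons b p => simp [subtreeAt] at hu
  | .node l r, C => by
    constructor
    · intro hC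
      simp only [clusters, Set.mem_insert_iff, Set.mem_union] at hC
      rcases hC with rfl | hC | hC
      · exact ⟨[], .node l r, subtreeAt_nil _, rfl⟩
      · obtain ⟨p, u, hu, rfl⟩ := (mem_clusters_iff l C).1 hC
        exact ⟨false :: p, u, hu, rfl⟩
      · obtain ⟨p, u, hu, rfl⟩ := (mem_clusters_iff r C).1 hC
        exact ⟨true :: p, u, hu, rfl⟩
    · rintro ⟨p, u, hu, rfl⟩
      cases p with
      | nil =>
        simp only [subtreeAt, Option.some.injEq] at hu; subst hu
        simp [clusters]
      | cons b p =>
        cases b with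
        | false =>
          simp only [subtreeAt] at hu
          exact Set.mem_insert_iff.2 (Or.inr (Set.mem_union_left _
            ((mem_clusters_iff l _).2 ⟨p, u, hu, rfl⟩)))
        | true =>
          simp only [subtreeAt] at hu
          exact Set.mem_insert_iff.2 (Or.inr (Set.mem_union_right _
            ((mem_clusters_iff r _).2 ⟨p, u, hu, rfl⟩)))

lemma self_mem_clusters (t : BTree) : {y | y ∈ t.leafList} ∈ t.clusters :=
  (mem_clusters_iff t _).2 ⟨[], t, subtreeAt_nil _, rfl⟩

lemma clusters_subset {t : BTree} {C : Set ℕ} (h : C ∈ t.clusters) :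
    C ⊆ {y | y ∈ t.leafList} := by
  obtain ⟨p, u, hu, rfl⟩ := (mem_clusters_iff t C).1 h
  exact fun y hy => mem_of_subtreeAt hu hy

lemma clusters_nonempty {t : BTree} {C : Set ℕ} (h : C ∈ t.clusters) : C.Nonempty := by
  obtain ⟨p, u, hu, rfl⟩ := (mem_clusters_iff t C).1 h
  obtain ⟨y, hy⟩ := List.exists_mem_of_ne_nil _ (leafList_ne_nil u)
  exact ⟨y, hy⟩

lemma exists_leaf_pos : ∀ (t : BTree) (x : ℕ), x ∈ t.leafList →
    ∃ p, t.subtreeAt p = some (.leaf x)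
  | .leaf y, x => by
    simp only [leafList, List.mem_singleton]
    rintro rfl; exact ⟨[], rfl⟩
  | .node l r, x => by
    simp only [leafList, List.mem_append]
    rintro (hx | hx)
    · obtain ⟨p, hp⟩ := exists_leaf_pos l x hx; exact ⟨false :: p, hp⟩
    · obtain ⟨p, hp⟩ := exists_leaf_pos r x hx; exact ⟨true :: p, hp⟩

lemma exists_secondmin : ∀ (t : BTree) (x : ℕ), x ∈ t.leafList → x ≠ t.minLeaf →
    ∃ p u, t.subtreeAt p = some u ∧ u.idx = -(x : ℤ)
  | .leaf y, x => by
    simp only [leafList, List.mem_singleton, minLeaf]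
    rintro rfl h; exact absurd rfl h
  | .node l r, x => by
    simp only [leafList, List.mem_append, minLeaf_node]
    rintro (hx | hx) hne
    · by_cases hxl : x = l.minLeaf
      · subst hxl
        have hlt : r.minLeaf < l.minLeaf := by
          by_contra hge
          exact hne (min_eq_left (not_lt.1 hge)).symm
        refine ⟨[], .node l r, subtreeAt_nil _, ?_⟩
        rw [idx_node, max_eq_left hlt.le]
      · obtain ⟨p, u, hp, hu⟩ := exists_secondmin l x hx hxl
        exact ⟨false :: p, u, hp, hu⟩
    · by_cases hxr : x = r.minLeaf
      · subst hxr
        have hlt : l.minLeaf < r.minLeaf := by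
          by_contra hge
          exact hne (min_eq_right (not_lt.1 hge)).symm
        refine ⟨[], .node l r, subtreeAt_nil _, ?_⟩
        rw [idx_node, max_eq_right hlt.le]
      · obtain ⟨p, u, hp, hu⟩ := exists_secondmin r x hx hxr
        exact ⟨true :: p, u, hp, hu⟩

end BTree

namespace BTree

lemma max_minLeaf_mem (l r : BTree) :
    max l.minLeaf r.minLeaf ∈ (BTree.node l r).leafList := by
  simp only [leafList, List.mem_append]
  rcases max_cases l.minLeaf r.minLeaf with ⟨h, _⟩ | ⟨h, _⟩ <;> rw [h]
  · exact Or.inl (minLeaf_mem l)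
  · exact Or.inr (minLeaf_mem r)

lemma nodup_children {l r : BTree} (hn : (BTree.node l r).leafList.Nodup) :
    l.leafList.Nodup ∧ r.leafList.Nodup := by
  rw [leafList, List.nodup_append] at hn
  exact ⟨hn.1, hn.2.1⟩

lemma no_proper_same_idx {l r : BTree} (hn : (BTree.node l r).leafList.Nodup)
    {b : Bool} {q : List Bool} {u : BTree}
    (hu : (BTree.node l r).subtreeAt (b :: q) = some u)
    (hidx : u.idx = (BTree.node l r).idx) : False := by
  have hneg : u.idx < 0 := hidx ▸ idx_node_neg hn
  obtain ⟨ul, ur, rfl⟩ : ∃ ul ur, u = .node ul ur := by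
    cases u with
    | leaf y => simp [idx] at hneg; omega
    | node ul ur => exact ⟨ul, ur, rfl⟩
  have hxu : max ul.minLeaf ur.minLeaf = max l.minLeaf r.minLeaf := by
    rw [idx_node, idx_node, neg_inj] at hidx
    exact_mod_cast hidx
  have hnu : (BTree.node ul ur).leafList.Nodup := nodup_of_subtreeAt hu hn
  have hminlt : min ul.minLeaf ur.minLeaf < max l.minLeaf r.minLeaf :=
    hxu ▸ minLeaf_lt_max hnu
  have hxmem : max l.minLeaf r.minLeaf ∈ (BTree.node ul ur).leafList := by
    rw [← hxu]; exact max_minLeaf_mem ul ur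
  have hminmem : min ul.minLeaf ur.minLeaf ∈ (BTree.node ul ur).leafList := by
    rw [← minLeaf_node]; exact minLeaf_mem _
  cases b with
  | false =>
    simp only [subtreeAt] at hu
    have hsub : ∀ y ∈ (BTree.node ul ur).leafList, y ∈ l.leafList :=
      fun y hy => mem_of_subtreeAt hu hy
    rcases max_cases l.minLeaf r.minLeaf with ⟨hm, _⟩ | ⟨hm, _⟩
    · have h1 : l.minLeaf ≤ min ul.minLeaf ur.minLeaf := minLeaf_le l _ (hsub _ hminmem)
      rw [hm] at hminlt
      exact absurd hminlt (not_lt.2 h1)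
    · refine nodup_disjoint hn _ (hsub _ hxmem) ?_
      rw [hm]; exact minLeaf_mem r
  | true =>
    simp only [subtreeAt] at hu
    have hsub : ∀ y ∈ (BTree.node ul ur).leafList, y ∈ r.leafList :=
      fun y hy => mem_of_subtreeAt hu hy
    rcases max_cases l.minLeaf r.minLeaf with ⟨hm, _⟩ | ⟨hm, _⟩
    · refine nodup_disjoint hn _ ?_ (hsub _ hxmem)
      rw [hm]; exact minLeaf_mem l
    · have h1 : r.minLeaf ≤ min ul.minLeaf ur.minLeaf := minLeaf_le r _ (hsub _ hminmem)
      rw [hm] at hminlt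
      exact absurd hminlt (not_lt.2 h1)

lemma subtreeAt_idx_inj : ∀ (t : BTree), t.leafList.Nodup →
    ∀ (p₁ p₂ : List Bool) (u₁ u₂ : BTree), t.subtreeAt p₁ = some u₁ →
    t.subtreeAt p₂ = some u₂ → u₁.idx = u₂.idx → p₁ = p₂
  | .leaf x, _, p₁, p₂, u₁, u₂, h₁, h₂, _ => by
    cases p₁ with
    | nil =>
      cases p₂ with
      | nil => rfl
      | cons b q => simp [subtreeAt] at h₂
    | cons b q => simp [subtreeAt] at h₁
  | .node l r, hn, p₁, p₂, u₁, u₂, h₁, h₂, hidx => by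
    obtain ⟨hnl, hnr⟩ := nodup_children hn
    cases p₁ with
    | nil =>
      rw [subtreeAt_nil, Option.some.injEq] at h₁; subst h₁
      cases p₂ with
      | nil => rfl
      | cons b q => exact absurd hidx.symm (fun h => no_proper_same_idx hn h₂ h)
    | cons b q =>
      cases p₂ with
      | nil =>
        rw [subtreeAt_nil, Option.some.injEq] at h₂; subst h₂
        exact absurd hidx (fun h => no_proper_same_idx hn h₁ h)
      | cons b' q' =>
        have hmem₁ : u₁.idx.natAbs ∈ u₁.leafList := natAbs_idx_mem u₁
        have hmem₂ : u₂.idx.natAbs ∈ u₂.leafList := natAbs_idx_mem u₂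
        rw [hidx] at hmem₁
        cases b <;> cases b' <;> simp only [subtreeAt] at h₁ h₂
        · exact congrArg (List.cons false) (subtreeAt_idx_inj l hnl q q' u₁ u₂ h₁ h₂ hidx)
        · exact absurd (mem_of_subtreeAt h₂ hmem₂)
            (fun h => nodup_disjoint hn _ (mem_of_subtreeAt h₁ hmem₁) h)
        · exact absurd (mem_of_subtreeAt h₁ hmem₁)
            (fun h => nodup_disjoint hn _ (mem_of_subtreeAt h₂ hmem₂) h)
        · exact congrArg (List.cons true) (subtreeAt_idx_inj r hnr q q' u₁ u₂ h₁ h₂ hidx)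

lemma clusters_subset_full_l {l r : BTree} {C : Set ℕ} (h : C ∈ l.clusters) :
    C ⊆ {y | y ∈ (BTree.node l r).leafList} := fun y hy => by
  simp only [leafList, List.mem_append, Set.mem_setOf_eq]
  exact Or.inl (clusters_subset h hy)

lemma clusters_subset_full_r {l r : BTree} {C : Set ℕ} (h : C ∈ r.clusters) :
    C ⊆ {y | y ∈ (BTree.node l r).leafList} := fun y hy => by
  simp only [leafList, List.mem_append, Set.mem_setOf_eq]
  exact Or.inr (clusters_subset h hy)

lemma clusters_laminar : ∀ (t : BTree), t.leafList.Nodup →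
    ∀ C₁ ∈ t.clusters, ∀ C₂ ∈ t.clusters, ∀ x, x ∈ C₁ → x ∈ C₂ → C₁ ⊆ C₂ ∨ C₂ ⊆ C₁
  | .leaf y, _, C₁, h₁, C₂, h₂, x, _, _ => by
    simp only [clusters, Set.mem_singleton_iff] at h₁ h₂
    subst h₁; subst h₂; exact Or.inl subset_rfl
  | .node l r, hn, C₁, h₁, C₂, h₂, x, hx₁, hx₂ => by
    obtain ⟨hnl, hnr⟩ := nodup_children hn
    simp only [clusters, Set.mem_insert_iff, Set.mem_union] at h₁ h₂
    rcases h₁ with rfl | h₁ | h₁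
    · rcases h₂ with rfl | h₂ | h₂
      · exact Or.inl subset_rfl
      · exact Or.inr (clusters_subset_full_l h₂)
      · exact Or.inr (clusters_subset_full_r h₂)
    · rcases h₂ with rfl | h₂ | h₂
      · exact Or.inl (clusters_subset_full_l h₁)
      · exact clusters_laminar l hnl C₁ h₁ C₂ h₂ x hx₁ hx₂
      · exact absurd (clusters_subset h₂ hx₂)
          (fun h => nodup_disjoint hn x (clusters_subset h₁ hx₁) h)
    · rcases h₂ with rfl | h₂ | h₂
      · exact Or.inl (clusters_subset_full_r h₁)
      · exact absurd (clusters_subset h₁ hx₁)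
          (fun h => nodup_disjoint hn x (clusters_subset h₂ hx₂) h)
      · exact clusters_laminar r hnr C₁ h₁ C₂ h₂ x hx₁ hx₂

lemma parent_cluster : ∀ (t : BTree), t.leafList.Nodup → ∀ (p : List Bool) (w : BTree) (m : ℕ),
    (t.subtreeAt p = some (.node (.leaf m) w) ∨ t.subtreeAt p = some (.node w (.leaf m))) →
    ∀ C ∈ t.clusters, m ∈ C → C = {m} ∨ ({y | y ∈ w.leafList} ∪ {m}) ⊆ C
  | .leaf y, _, p, w, m, hp, C, hC, hm => by
    cases p with
    | nil => rcases hp with hp | hp <;> rw [subtreeAt_nil] at hp <;> simp at hp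
    | cons b q => rcases hp with hp | hp <;> simp [subtreeAt] at hp
  | .node l r, hn, p, w, m, hp, C, hC, hm => by
    obtain ⟨hnl, hnr⟩ := nodup_children hn
    have hmw : m ∈ (BTree.node l r).leafList → True := fun _ => trivial
    cases p with
    | nil =>
      have hlr : (l = .leaf m ∧ r = w) ∨ (l = w ∧ r = .leaf m) := by
        rcases hp with hp | hp <;> rw [subtreeAt_nil, Option.some.injEq] at hp <;>
          injection hp with h1 h2
        · exact Or.inl ⟨h1, h2⟩
        · exact Or.inr ⟨h1, h2⟩
      simp only [clusters, Set.mem_insert_iff, Set.mem_union] at hC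
      rcases hlr with ⟨rfl, rfl⟩ | ⟨rfl, rfl⟩
      · rcases hC with rfl | hC | hC
        · refine Or.inr ?_
          rintro y (hy | rfl)
          · simp only [leafList, List.mem_append, Set.mem_setOf_eq]
            exact Or.inr hy
          · simp [leafList]
        · simp only [clusters, Set.mem_singleton_iff] at hC
          exact Or.inl hC
        · exact absurd (clusters_subset hC hm)
            (fun h => nodup_disjoint hn m (by simp [leafList]) h)
      · rcases hC with rfl | hC | hC
        · refine Or.inr ?_
          rintro y (hy | rfl)
          · simp only [leafList, List.mem_append, Set.mem_setOf_eq]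
            exact Or.inl hy
          · simp [leafList]
        · exact absurd (clusters_subset hC hm)
            (fun h => nodup_disjoint hn m h (by simp [leafList]))
        · simp only [clusters, Set.mem_singleton_iff] at hC
          exact Or.inl hC
    | cons b q =>
      have hmls : m ∈ (BTree.node (BTree.leaf m) w).leafList := by simp [leafList]
      have hmrs : m ∈ (BTree.node w (BTree.leaf m)).leafList := by simp [leafList]
      have hwls : ∀ y ∈ w.leafList, y ∈ (BTree.node (BTree.leaf m) w).leafList := by
        intro y hy; simp [leafList, hy]
      have hwrs : ∀ y ∈ w.leafList, y ∈ (BTree.node w (BTree.leaf m)).leafList := by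
        intro y hy; simp [leafList, hy]
      cases b with
      | false =>
        simp only [subtreeAt] at hp
        have hml : m ∈ l.leafList := by
          rcases hp with hp | hp
          · exact mem_of_subtreeAt hp hmls
          · exact mem_of_subtreeAt hp hmrs
        have hwl : ∀ y ∈ w.leafList, y ∈ l.leafList := by
          intro y hy
          rcases hp with hp | hp
          · exact mem_of_subtreeAt hp (hwls y hy)
          · exact mem_of_subtreeAt hp (hwrs y hy)
        simp only [clusters, Set.mem_insert_iff, Set.mem_union] at hC
        rcases hC with rfl | hC | hC
        · refine Or.inr ?_
          rintro y (hy | rfl)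
          · simp only [leafList, List.mem_append, Set.mem_setOf_eq]
            exact Or.inl (hwl y hy)
          · simp only [leafList, List.mem_append, Set.mem_setOf_eq]
            exact Or.inl hml
        · exact parent_cluster l hnl q w m hp C hC hm
        · exact absurd (clusters_subset hC hm) (fun h => nodup_disjoint hn m hml h)
      | true =>
        simp only [subtreeAt] at hp
        have hmr : m ∈ r.leafList := by
          rcases hp with hp | hp
          · exact mem_of_subtreeAt hp hmls
          · exact mem_of_subtreeAt hp hmrs
        have hwr : ∀ y ∈ w.leafList, y ∈ r.leafList := by
          intro y hy
          rcases hp with hp | hp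
          · exact mem_of_subtreeAt hp (hwls y hy)
          · exact mem_of_subtreeAt hp (hwrs y hy)
        simp only [clusters, Set.mem_insert_iff, Set.mem_union] at hC
        rcases hC with rfl | hC | hC
        · refine Or.inr ?_
          rintro y (hy | rfl)
          · simp only [leafList, List.mem_append, Set.mem_setOf_eq]
            exact Or.inr (hwr y hy)
          · simp only [leafList, List.mem_append, Set.mem_setOf_eq]
            exact Or.inr hmr
        · exact absurd (clusters_subset hC hm) (fun h => nodup_disjoint hn m h hmr)
        · exact parent_cluster r hnr q w m hp C hC hm

lemma secondmin_cluster_min : ∀ (t : BTree), t.leafList.Nodup →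
    ∀ (p : List Bool) (l' r' : BTree), t.subtreeAt p = some (.node l' r') →
    ∀ C ∈ t.clusters, max l'.minLeaf r'.minLeaf ∈ C →
    (∃ y ∈ C, y < max l'.minLeaf r'.minLeaf) → {y | y ∈ (BTree.node l' r').leafList} ⊆ C
  | .leaf x, _, p, l', r', hp, C, hC, hxC, hy => by
    cases p with
    | nil => rw [subtreeAt_nil] at hp; simp at hp
    | cons b q => simp [subtreeAt] at hp
  | .node l r, hn, p, l', r', hp, C, hC, hxC, hy => by
    obtain ⟨hnl, hnr⟩ := nodup_children hn
    set x := max l'.minLeaf r'.minLeaf with hxdef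
    cases p with
    | nil =>
      rw [subtreeAt_nil, Option.some.injEq] at hp
      have hl : l = l' := by cases hp; rfl
      have hr : r = r' := by cases hp; rfl
      subst hl; subst hr
      simp only [clusters, Set.mem_insert_iff, Set.mem_union] at hC
      rcases hC with rfl | hC | hC
      · exact subset_rfl
      · obtain ⟨y, hyC, hylt⟩ := hy
        rcases max_cases l.minLeaf r.minLeaf with ⟨hm, _⟩ | ⟨hm, _⟩
        · have h1 : l.minLeaf ≤ y := minLeaf_le l y (clusters_subset hC hyC)
          rw [← hxdef] at hm
          omega
        · exact absurd (clusters_subset hC hxC)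
            (fun h => nodup_disjoint hn x h (by rw [hxdef, hm]; exact minLeaf_mem r))
      · obtain ⟨y, hyC, hylt⟩ := hy
        rcases max_cases l.minLeaf r.minLeaf with ⟨hm, _⟩ | ⟨hm, _⟩
        · exact absurd (clusters_subset hC hxC)
            (fun h => nodup_disjoint hn x (by rw [hxdef, hm]; exact minLeaf_mem l) h)
        · have h1 : r.minLeaf ≤ y := minLeaf_le r y (clusters_subset hC hyC)
          rw [← hxdef] at hm
          omega
    | cons b q =>
      have hxmem : x ∈ (BTree.node l' r').leafList := max_minLeaf_mem l' r'
      cases b with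
      | false =>
        simp only [subtreeAt] at hp
        have hsub : ∀ y ∈ (BTree.node l' r').leafList, y ∈ l.leafList :=
          fun y hy => mem_of_subtreeAt hp hy
        simp only [clusters, Set.mem_insert_iff, Set.mem_union] at hC
        rcases hC with rfl | hC | hC
        · exact fun y hy => by
            simp only [leafList, List.mem_append, Set.mem_setOf_eq]
            exact Or.inl (hsub y hy)
        · exact secondmin_cluster_min l hnl q l' r' hp C hC hxC hy
        · exact absurd (clusters_subset hC hxC)
            (fun h => nodup_disjoint hn x (hsub x hxmem) h)
      | true =>
        simp only [subtreeAt] at hp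
        have hsub : ∀ y ∈ (BTree.node l' r').leafList, y ∈ r.leafList :=
          fun y hy => mem_of_subtreeAt hp hy
        simp only [clusters, Set.mem_insert_iff, Set.mem_union] at hC
        rcases hC with rfl | hC | hC
        · exact fun y hy => by
            simp only [leafList, List.mem_append, Set.mem_setOf_eq]
            exact Or.inr (hsub y hy)
        · exact absurd (clusters_subset hC hxC)
            (fun h => nodup_disjoint hn x h (hsub x hxmem))
        · exact secondmin_cluster_min r hnr q l' r' hp C hC hxC hy

end BTree

namespace BTree

lemma restrictTo_elim : ∀ (t : BTree) (S : Finset ℕ),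
    (t.restrictTo S).elim [] leafList = t.leafList.filter (fun y => y ∈ S)
  | .leaf x, S => by
    by_cases h : x ∈ S <;> simp [restrictTo, h, leafList]
  | .node l r, S => by
    have hl := restrictTo_elim l S
    have hr := restrictTo_elim r S
    have hfa : (BTree.node l r).leafList.filter (fun y => y ∈ S) =
        l.leafList.filter (fun y => y ∈ S) ++ r.leafList.filter (fun y => y ∈ S) := by
      simp [leafList, List.filter_append]
    cases h1 : l.restrictTo S with
    | none =>
      rw [h1] at hl
      cases h2 : r.restrictTo S with
      | none =>
        rw [h2] at hr
        simp only [restrictTo, h1, h2, hfa, ← hl, ← hr]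
        simp
      | some r' =>
        rw [h2] at hr
        simp only [restrictTo, h1, h2, hfa, ← hl, ← hr]
        simp
    | some l' =>
      rw [h1] at hl
      cases h2 : r.restrictTo S with
      | none =>
        rw [h2] at hr
        simp only [restrictTo, h1, h2, hfa, ← hl, ← hr]
        simp
      | some r' =>
        rw [h2] at hr
        simp only [restrictTo, h1, h2, hfa, ← hl, ← hr]
        simp [leafList]

lemma restrictTo_leafList {t : BTree} {S : Finset ℕ} {t' : BTree}
    (h : t.restrictTo S = some t') :
    t'.leafList = t.leafList.filter (fun y => y ∈ S) := by
  have := restrictTo_elim t S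
  rw [h] at this
  exact this

lemma restrictTo_none {t : BTree} {S : Finset ℕ} (h : t.restrictTo S = none) :
    ∀ y ∈ t.leafList, y ∉ S := by
  have := restrictTo_elim t S
  rw [h] at this
  intro y hy hyS
  have : y ∈ t.leafList.filter (fun y => y ∈ S) := List.mem_filter.2 ⟨hy, by simp [hyS]⟩
  rw [← restrictTo_elim t S, h] at this
  simp at this

lemma restrictTo_some {t : BTree} {S : Finset ℕ} {x : ℕ} (hx : x ∈ t.leafList)
    (hxS : x ∈ S) : ∃ t', t.restrictTo S = some t' := by
  cases h : t.restrictTo S with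
  | none => exact absurd hxS (restrictTo_none h x hx)
  | some t' => exact ⟨t', rfl⟩

lemma mem_restrictTo_leafList {t : BTree} {S : Finset ℕ} {t' : BTree}
    (h : t.restrictTo S = some t') {y : ℕ} :
    y ∈ t'.leafList ↔ y ∈ t.leafList ∧ y ∈ S := by
  rw [restrictTo_leafList h, List.mem_filter]
  simp

def cInt (t : BTree) (S : Finset ℕ) : Set (Set ℕ) :=
  {E | ∃ C ∈ t.clusters, E = C ∩ {y : ℕ | y ∈ S} ∧ E.Nonempty}

lemma clusters_restrictTo : ∀ (t : BTree) (S : Finset ℕ) (t' : BTree),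
    t.restrictTo S = some t' → t'.clusters = cInt t S
  | .leaf x, S, t', h => by
    have hx : x ∈ S := by
      by_contra hx
      simp [restrictTo, hx] at h
    have ht' : t' = .leaf x := by
      simp [restrictTo, hx] at h
      exact h.symm
    subst ht'
    ext E
    simp only [clusters, Set.mem_singleton_iff, cInt, Set.mem_setOf_eq]
    constructor
    · rintro rfl
      exact ⟨{x}, rfl, by ext y; simp [hx], ⟨x, by simp [hx]⟩⟩
    · rintro ⟨C, hC, rfl, hne⟩
      subst hC
      ext y; simp; rintro rfl; exact hx
  | .node l r, S, t', h => by
    cases h1 : l.restrictTo S with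
    | none =>
      cases h2 : r.restrictTo S with
      | none => simp [restrictTo, h1, h2] at h
      | some r' =>
        have ht' : t' = r' := by simp [restrictTo, h1, h2] at h; exact h.symm
        rw [ht', clusters_restrictTo r S r' h2]
        ext E
        simp only [cInt, Set.mem_setOf_eq]
        constructor
        · rintro ⟨C, hC, rfl, hne⟩
          exact ⟨C, Set.mem_insert_iff.2 (Or.inr (Set.mem_union_right _ hC)), rfl, hne⟩
        · rintro ⟨C, hC, rfl, hne⟩
          simp only [clusters, Set.mem_insert_iff, Set.mem_union] at hC
          rcases hC with rfl | hC | hC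
          · refine ⟨{y | y ∈ r.leafList}, self_mem_clusters r, ?_, ?_⟩
            · ext y
              simp only [Set.mem_inter_iff, Set.mem_setOf_eq, leafList, List.mem_append]
              constructor
              · rintro ⟨hy | hy, hyS⟩
                · exact absurd hyS (restrictTo_none h1 y hy)
                · exact ⟨hy, hyS⟩
              · rintro ⟨hy, hyS⟩; exact ⟨Or.inr hy, hyS⟩
            · exact hne
          · obtain ⟨y, hy1, hy2⟩ := hne
            exact absurd hy2 (restrictTo_none h1 y (clusters_subset hC hy1))
          · exact ⟨C, hC, rfl, hne⟩
    | some l' =>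
      cases h2 : r.restrictTo S with
      | none =>
        have ht' : t' = l' := by simp [restrictTo, h1, h2] at h; exact h.symm
        rw [ht', clusters_restrictTo l S l' h1]
        ext E
        simp only [cInt, Set.mem_setOf_eq]
        constructor
        · rintro ⟨C, hC, rfl, hne⟩
          exact ⟨C, Set.mem_insert_iff.2 (Or.inr (Set.mem_union_left _ hC)), rfl, hne⟩
        · rintro ⟨C, hC, rfl, hne⟩
          simp only [clusters, Set.mem_insert_iff, Set.mem_union] at hC
          rcases hC with rfl | hC | hC
          · refine ⟨{y | y ∈ l.leafList}, self_mem_clusters l, ?_, ?_⟩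
            · ext y
              simp only [Set.mem_inter_iff, Set.mem_setOf_eq, leafList, List.mem_append]
              constructor
              · rintro ⟨hy | hy, hyS⟩
                · exact ⟨hy, hyS⟩
                · exact absurd hyS (restrictTo_none h2 y hy)
              · rintro ⟨hy, hyS⟩; exact ⟨Or.inl hy, hyS⟩
            · exact hne
          · exact ⟨C, hC, rfl, hne⟩
          · obtain ⟨y, hy1, hy2⟩ := hne
            exact absurd hy2 (restrictTo_none h2 y (clusters_subset hC hy1))
      | some r' =>
        have ht' : t' = .node l' r' := by simp [restrictTo, h1, h2] at h; exact h.symm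
        rw [ht']
        have hIl := clusters_restrictTo l S l' h1
        have hIr := clusters_restrictTo r S r' h2
        have hfull : {y | y ∈ (BTree.node l' r').leafList} =
            {y | y ∈ (BTree.node l r).leafList} ∩ {y : ℕ | y ∈ S} := by
          ext y
          have e1 := mem_restrictTo_leafList h1 (y := y)
          have e2 := mem_restrictTo_leafList h2 (y := y)
          simp only [Set.mem_inter_iff, Set.mem_setOf_eq, leafList, List.mem_append, e1, e2]
          tauto
        ext E
        simp only [clusters, Set.mem_insert_iff, Set.mem_union, hIl, hIr, cInt,
          Set.mem_setOf_eq]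
        constructor
        · rintro (rfl | ⟨C, hC, rfl, hne⟩ | ⟨C, hC, rfl, hne⟩)
          · refine ⟨{y | y ∈ (BTree.node l r).leafList}, Or.inl rfl, hfull, ?_⟩
            obtain ⟨y, hy⟩ := List.exists_mem_of_ne_nil _ (leafList_ne_nil (BTree.node l' r'))
            exact ⟨y, hy⟩
          · exact ⟨C, Or.inr (Or.inl hC), rfl, hne⟩
          · exact ⟨C, Or.inr (Or.inr hC), rfl, hne⟩
        · rintro ⟨C, (rfl | hC | hC), rfl, hne⟩
          · exact Or.inl hfull.symm
          · exact Or.inr (Or.inl ⟨C, hC, rfl, hne⟩)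
          · exact Or.inr (Or.inr ⟨C, hC, rfl, hne⟩)

lemma restrictTo_restrictTo : ∀ (t : BTree) (A B : Finset ℕ), (∀ x ∈ B, x ∈ A) →
    ∀ t'' : BTree, t.restrictTo A = some t'' → t''.restrictTo B = t.restrictTo B
  | .leaf x, A, B, hBA, t'', h => by
    by_cases hxA : x ∈ A
    · simp only [restrictTo, if_pos hxA, Option.some.injEq] at h
      subst h; rfl
    · simp [restrictTo, hxA] at h
  | .node l r, A, B, hBA, t'', h => by
    cases h1 : l.restrictTo A with
    | none =>
      cases h2 : r.restrictTo A with
      | none => simp [restrictTo, h1, h2] at h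
      | some r' =>
        have ht : t'' = r' := by simp [restrictTo, h1, h2] at h; exact h.symm
        rw [ht]
        have hlB : l.restrictTo B = none := by
          cases h3 : l.restrictTo B with
          | none => rfl
          | some l3 =>
            obtain ⟨y, hy⟩ := List.exists_mem_of_ne_nil _ (leafList_ne_nil l3)
            have := (mem_restrictTo_leafList h3).1 hy
            exact absurd (hBA y this.2) (restrictTo_none h1 y this.1)
        rw [restrictTo_restrictTo r A B hBA r' h2]
        show r.restrictTo B = (BTree.node l r).restrictTo B
        simp only [restrictTo, hlB]
        cases h4 : r.restrictTo B <;> rfl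
    | some l' =>
      cases h2 : r.restrictTo A with
      | none =>
        have ht : t'' = l' := by simp [restrictTo, h1, h2] at h; exact h.symm
        rw [ht]
        have hrB : r.restrictTo B = none := by
          cases h3 : r.restrictTo B with
          | none => rfl
          | some r3 =>
            obtain ⟨y, hy⟩ := List.exists_mem_of_ne_nil _ (leafList_ne_nil r3)
            have := (mem_restrictTo_leafList h3).1 hy
            exact absurd (hBA y this.2) (restrictTo_none h2 y this.1)
        rw [restrictTo_restrictTo l A B hBA l' h1]
        show l.restrictTo B = (BTree.node l r).restrictTo B
        simp only [restrictTo, hrB]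
        cases h4 : l.restrictTo B <;> rfl
      | some r' =>
        have ht : t'' = .node l' r' := by simp [restrictTo, h1, h2] at h; exact h.symm
        rw [ht]
        show (BTree.node l' r').restrictTo B = (BTree.node l r).restrictTo B
        simp only [restrictTo, restrictTo_restrictTo l A B hBA l' h1,
          restrictTo_restrictTo r A B hBA r' h2]

lemma restrictLe_eq : ∀ (t : BTree) (i : ℕ), t.restrictLe i = t.restrictTo (Finset.range (i+1))
  | .leaf x, i => by
    simp [restrictLe, restrictTo, Finset.mem_range, Nat.lt_succ_iff]
  | .node l r, i => by
    simp only [restrictLe, restrictTo, restrictLe_eq l i, restrictLe_eq r i]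

end BTree

namespace BTree

lemma siblingIdx_none : ∀ (t : BTree) (m : ℕ), m ∉ t.leafList → t.siblingIdx m = none
  | .leaf x, m, h => rfl
  | .node l r, m, h => by
    simp only [leafList, List.mem_append, not_or] at h
    have hl : l ≠ .leaf m := by rintro rfl; exact h.1 (by simp [leafList])
    have hr : r ≠ .leaf m := by rintro rfl; exact h.2 (by simp [leafList])
    simp only [siblingIdx, if_neg hl, if_neg hr, siblingIdx_none l m h.1,
      siblingIdx_none r m h.2]
    rfl

lemma sibling_exists : ∀ (t : BTree), t.leafList.Nodup → ∀ m ∈ t.leafList,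
    (∀ x, t ≠ .leaf x) → ∃ p w,
      (t.subtreeAt p = some (.node (.leaf m) w) ∨ t.subtreeAt p = some (.node w (.leaf m))) ∧
      t.siblingIdx m = some w.idx ∧ (∀ y ∈ w.leafList, y ∈ t.leafList) ∧ m ∉ w.leafList
  | .leaf x, _, m, hm, hne => absurd rfl (hne x)
  | .node l r, hn, m, hm, _ => by
    by_cases hl : l = .leaf m
    · subst hl
      refine ⟨[], r, Or.inl (subtreeAt_nil _), by simp [siblingIdx], ?_, ?_⟩
      · intro y hy; simp [leafList, hy]
      · exact fun h => nodup_disjoint hn m (by simp [leafList]) h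
    · by_cases hr : r = .leaf m
      · subst hr
        refine ⟨[], l, Or.inr (subtreeAt_nil _), by simp [siblingIdx, hl], ?_, ?_⟩
        · intro y hy; simp [leafList, hy]
        · exact fun h => nodup_disjoint hn m h (by simp [leafList])
      · simp only [leafList, List.mem_append] at hm
        rcases hm with hm | hm
        · have hlnl : ∀ x, l ≠ .leaf x := by
            rintro x rfl
            simp only [leafList, List.mem_singleton] at hm
            exact hl (by rw [hm])
          obtain ⟨p, w, hp, hsib, hsub, hmw⟩ :=
            sibling_exists l (nodup_children hn).1 m hm hlnl
          refine ⟨false :: p, w, ?_, ?_, ?_, hmw⟩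
          · rcases hp with hp | hp
            · exact Or.inl (by simpa [subtreeAt] using hp)
            · exact Or.inr (by simpa [subtreeAt] using hp)
          · simp only [siblingIdx, if_neg hl, if_neg hr, hsib]; rfl
          · intro y hy
            simp only [leafList, List.mem_append]
            exact Or.inl (hsub y hy)
        · have hrnl : ∀ x, r ≠ .leaf x := by
            rintro x rfl
            simp only [leafList, List.mem_singleton] at hm
            exact hr (by rw [hm])
          have hml : m ∉ l.leafList := fun h => nodup_disjoint hn m h hm
          obtain ⟨p, w, hp, hsib, hsub, hmw⟩ :=
            sibling_exists r (nodup_children hn).2 m hm hrnl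
          refine ⟨true :: p, w, ?_, ?_, ?_, hmw⟩
          · rcases hp with hp | hp
            · exact Or.inl (by simpa [subtreeAt] using hp)
            · exact Or.inr (by simpa [subtreeAt] using hp)
          · simp only [siblingIdx, if_neg hl, if_neg hr, siblingIdx_none l m hml, hsib]; rfl
          · intro y hy
            simp only [leafList, List.mem_append]
            exact Or.inr (hsub y hy)

lemma mem_leafList_phylo {t : BTree} {n : ℕ} (h : t.IsPhylo n) {y : ℕ} :
    y ∈ t.leafList ↔ y < n := by
  have h2 := h.2
  rw [leafSet] at h2
  rw [← List.mem_toFinset, h2, Finset.mem_range]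

lemma restrict_phylo {t : BTree} {n : ℕ} (h : t.IsPhylo n) {k : ℕ} (hk : 1 ≤ k)
    (hkn : k ≤ n) : ∃ t', t.restrictTo (Finset.range k) = some t' ∧ t'.IsPhylo k := by
  have h0 : (0:ℕ) ∈ t.leafList := (mem_leafList_phylo h (y := 0)).2 (lt_of_lt_of_le hk hkn)
  obtain ⟨t', ht'⟩ := restrictTo_some h0 (Finset.mem_range.2 (show 0 < k by omega))
  refine ⟨t', ht', ?_, ?_⟩
  · rw [restrictTo_leafList ht']; exact h.1.filter _
  · rw [leafSet, restrictTo_leafList ht']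
    ext y
    rw [List.mem_toFinset, List.mem_filter]
    simp only [Finset.mem_range, decide_eq_true_eq]
    rw [mem_leafList_phylo h]
    constructor
    · rintro ⟨_, hy⟩; exact hy
    · intro hy; exact ⟨by omega, hy⟩

lemma olaEntry_spec {t : BTree} {n j : ℕ} (h : t.IsPhylo n) (hj : 1 ≤ j) (hjn : j < n) :
    ∃ tj w p, t.restrictLe j = some tj ∧ tj.IsPhylo (j+1) ∧
      (tj.subtreeAt p = some (.node (.leaf j) w) ∨ tj.subtreeAt p = some (.node w (.leaf j))) ∧
      t.olaEntry j = w.idx ∧ (j ∉ w.leafList) ∧ (∀ y ∈ w.leafList, y < j) := by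
  obtain ⟨tj, htj, hphy⟩ := restrict_phylo h (k := j+1) (by omega) (by omega)
  rw [← restrictLe_eq] at htj
  have hjmem : j ∈ tj.leafList := (mem_leafList_phylo hphy).2 (by omega)
  have hnotleaf : ∀ x, tj ≠ .leaf x := by
    rintro x rfl
    have h0 : (0:ℕ) ∈ leafList (.leaf x) := (mem_leafList_phylo hphy).2 (by omega)
    simp only [leafList, List.mem_singleton] at h0 hjmem
    omega
  obtain ⟨p, w, hp, hsib, hsub, hjw⟩ := sibling_exists tj hphy.1 j hjmem hnotleaf
  refine ⟨tj, w, p, htj, hphy, hp, ?_, hjw, ?_⟩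
  · simp [olaEntry, htj, hsib]
  · intro y hy
    have h1 := (mem_leafList_phylo hphy).1 (hsub y hy)
    have h2 : y ≠ j := fun he => hjw (he ▸ hy)
    omega

lemma olaEntry_bound {t : BTree} {n j : ℕ} (h : t.IsPhylo n) (hj : 1 ≤ j) (hjn : j < n) :
    (t.olaEntry j).natAbs < j := by
  obtain ⟨tj, w, p, _, _, _, hw, _, hlt⟩ := olaEntry_spec h hj hjn
  rw [hw]
  exact hlt _ (natAbs_idx_mem w)

lemma relabel_leafList (f : ℕ → ℕ) : ∀ t : BTree, (t.relabel f).leafList = t.leafList.map f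
  | .leaf x => rfl
  | .node l r => by
    simp [relabel, leafList, relabel_leafList f l, relabel_leafList f r]

end BTree

lemma relabel_phylo {t : BTree} {n : ℕ} {σ : Equiv.Perm ℕ} (h : t.IsPhylo n)
    (hσ : IsOrdering σ n) : (t.relabel σ).IsPhylo n := by
  constructor
  · rw [BTree.relabel_leafList]
    exact h.1.map σ.injective
  · rw [BTree.leafSet, BTree.relabel_leafList]
    have h2 : t.leafList.toFinset = Finset.range n := h.2
    have h3 : (t.leafList.map σ).toFinset = t.leafList.toFinset.image σ := by
      ext y; simp
    rw [h3, h2]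
    apply Finset.eq_of_subset_of_card_le
    · intro y hy
      obtain ⟨x, hx, rfl⟩ := Finset.mem_image.1 hy
      exact Finset.mem_range.2 (hσ x (Finset.mem_range.1 hx))
    · rw [Finset.card_image_of_injective _ σ.injective, Finset.card_range]

namespace BTree

lemma restrictTo_all : ∀ (t : BTree) (S : Finset ℕ), (∀ y ∈ t.leafList, y ∈ S) →
    t.restrictTo S = some t
  | .leaf x, S, h => by simp [restrictTo, h x (by simp [leafList])]
  | .node l r, S, h => by
    have hl : l.restrictTo S = some l := restrictTo_all l S
      (fun y hy => h y (by simp [leafList]; exact Or.inl hy))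
    have hr : r.restrictTo S = some r := restrictTo_all r S
      (fun y hy => h y (by simp [leafList]; exact Or.inr hy))
    simp [restrictTo, hl, hr]

lemma cInt_restrict {t t' : BTree} {k : ℕ} (h : t.restrictTo (Finset.range k) = some t')
    {S : Finset ℕ} (hS : ∀ j ∈ S, j < k) : cInt t' S = cInt t S := by
  have hc := clusters_restrictTo t _ t' h
  have hRS : ∀ C : Set ℕ, (C ∩ {y : ℕ | y ∈ Finset.range k}) ∩ {y : ℕ | y ∈ S} =
      C ∩ {y : ℕ | y ∈ S} := by
    intro C
    rw [Set.inter_assoc]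
    congr 1
    ext y
    simp only [Set.mem_inter_iff, Set.mem_setOf_eq, Finset.mem_range]
    exact ⟨fun h => h.2, fun h => ⟨hS y h, h⟩⟩
  ext E
  simp only [cInt, Set.mem_setOf_eq, hc]
  constructor
  · rintro ⟨C, ⟨C0, hC0, rfl, hne0⟩, rfl, hne⟩
    exact ⟨C0, hC0, hRS C0, hne⟩
  · rintro ⟨C, hC, rfl, hne⟩
    refine ⟨C ∩ {y : ℕ | y ∈ Finset.range k}, ⟨C, hC, rfl, ?_⟩, (hRS C).symm, ?_⟩
    · obtain ⟨y, hy1, hy2⟩ := hne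
      exact ⟨y, hy1, by simp only [Set.mem_setOf_eq, Finset.mem_range]; exact hS y hy2⟩
    · exact hne

lemma olaEntry_restrict {t t' : BTree} {k : ℕ} (h : t.restrictTo (Finset.range k) = some t')
    {j : ℕ} (hj : j < k) : t'.olaEntry j = t.olaEntry j := by
  unfold olaEntry
  rw [restrictLe_eq, restrictLe_eq, restrictTo_restrictTo t (Finset.range k)
    (Finset.range (j+1)) (fun x hx => Finset.mem_range.2
      (lt_of_lt_of_le (Finset.mem_range.1 hx) hj)) t' h]

lemma cInt_singleton {t : BTree} {x : ℕ} (hx : x ∈ t.leafList) :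
    cInt t {x} = {({x} : Set ℕ)} := by
  ext E
  simp only [cInt, Set.mem_setOf_eq, Set.mem_singleton_iff]
  constructor
  · rintro ⟨C, hC, rfl, hne⟩
    obtain ⟨y, hy1, hy2⟩ := hne
    have hyx : y = x := by simpa using hy2
    subst hyx
    ext z
    simp only [Set.mem_inter_iff, Set.mem_setOf_eq, Finset.mem_singleton,
      Set.mem_singleton_iff]
    constructor
    · rintro ⟨_, rfl⟩; rfl
    · rintro rfl; exact ⟨hy1, rfl⟩
  · rintro rfl
    obtain ⟨p0, hp0⟩ := exists_leaf_pos t x hx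
    refine ⟨{y | y ∈ (BTree.leaf x).leafList}, (mem_clusters_iff t _).2 ⟨p0, _, hp0, rfl⟩,
      ?_, ⟨x, rfl⟩⟩
    ext z
    simp only [Set.mem_singleton_iff, leafList, List.mem_singleton, Set.mem_inter_iff,
      Set.mem_setOf_eq, Finset.mem_singleton]
    constructor
    · rintro rfl; exact ⟨rfl, rfl⟩
    · rintro ⟨rfl, _⟩; rfl

lemma step_formula (t : BTree) (hn : t.leafList.Nodup) (m : ℕ) (S : Finset ℕ) (hmS : m ∈ S)
    (p : List Bool) (w : BTree)
    (hp : t.subtreeAt p = some (.node (.leaf m) w) ∨ t.subtreeAt p = some (.node w (.leaf m)))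
    (x : ℕ) (hxw : x ∈ w.leafList) (hxS' : x ∈ S.erase m) :
    cInt t S =
      {E | E ∈ cInt t (S.erase m) ∧
           ¬ (({y | y ∈ w.leafList} ∩ {y : ℕ | y ∈ S.erase m}) ⊂ E)} ∪
      {({m} : Set ℕ)} ∪
      {F | ∃ E, E ∈ cInt t (S.erase m) ∧
           ({y | y ∈ w.leafList} ∩ {y : ℕ | y ∈ S.erase m}) ⊆ E ∧ F = E ∪ {m}} := by
  classical
  have hmt : m ∈ t.leafList := by
    rcases hp with hp | hp
    · exact mem_of_subtreeAt hp (by simp [leafList])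
    · exact mem_of_subtreeAt hp (by simp [leafList])
  have hWcl : {y | y ∈ w.leafList} ∈ t.clusters := by
    rcases hp with hp | hp
    · refine (mem_clusters_iff t _).2 ⟨p ++ [true], w, ?_, rfl⟩
      rw [subtreeAt_append, hp]
      simp [subtreeAt, subtreeAt_nil]
    · refine (mem_clusters_iff t _).2 ⟨p ++ [false], w, ?_, rfl⟩
      rw [subtreeAt_append, hp]
      simp [subtreeAt, subtreeAt_nil]
  have hPcl : ({y | y ∈ w.leafList} ∪ {m} : Set ℕ) ∈ t.clusters := by
    rcases hp with hp | hp
    · refine (mem_clusters_iff t _).2 ⟨p, _, hp, ?_⟩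
      ext y
      simp only [leafList, List.mem_append, List.mem_singleton, Set.mem_union,
        Set.mem_setOf_eq, Set.mem_singleton_iff]
      tauto
    · refine (mem_clusters_iff t _).2 ⟨p, _, hp, ?_⟩
      ext y
      simp only [leafList, List.mem_append, List.mem_singleton, Set.mem_union,
        Set.mem_setOf_eq, Set.mem_singleton_iff]
  have hmW : m ∉ {y | y ∈ w.leafList} := by
    rcases hp with hp | hp
    · have hnd := nodup_of_subtreeAt hp hn
      exact fun hmw => nodup_disjoint hnd m (by simp [leafList]) hmw
    · have hnd := nodup_of_subtreeAt hp hn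
      exact fun hmw => nodup_disjoint hnd m hmw (by simp [leafList])
  have hmS' : m ∉ {y : ℕ | y ∈ S.erase m} := by simp
  have hxm : x ≠ m := (Finset.mem_erase.1 hxS').1
  have hxD : x ∈ {y | y ∈ w.leafList} ∩ {y : ℕ | y ∈ S.erase m} := ⟨hxw, hxS'⟩
  have hparent := parent_cluster t hn p w m hp
  have hlam : ∀ C ∈ t.clusters, x ∈ C →
      C ⊆ {y | y ∈ w.leafList} ∨ {y | y ∈ w.leafList} ⊆ C :=
    fun C hC hxC => clusters_laminar t hn C hC _ hWcl x hxC hxw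
  have hsupm : ∀ C ∈ t.clusters, {y | y ∈ w.leafList} ⊆ C → C ≠ {y | y ∈ w.leafList} →
      m ∈ C := by
    intro C hC hWC hne
    by_cases hm : m ∈ C
    · exact hm
    exfalso
    rcases clusters_laminar t hn C hC _ hPcl x (hWC hxw) (Or.inl hxw) with h1 | h1
    · refine hne (Set.Subset.antisymm ?_ hWC)
      intro y hy
      rcases h1 hy with hy2 | hy2
      · exact hy2
      · rw [Set.mem_singleton_iff] at hy2
        exact absurd (hy2 ▸ hy) hm
    · exact hm (h1 (Or.inr rfl))
  have hCS : ∀ C : Set ℕ, m ∉ C → C ∩ {y : ℕ | y ∈ S} = C ∩ {y : ℕ | y ∈ S.erase m} := by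
    intro C hmC
    ext y
    simp only [Set.mem_inter_iff, Set.mem_setOf_eq, Finset.mem_erase]
    constructor
    · rintro ⟨h1, h2⟩
      exact ⟨h1, fun he => hmC (he ▸ h1), h2⟩
    · rintro ⟨h1, _, h2⟩
      exact ⟨h1, h2⟩
  have hCS2 : ∀ C : Set ℕ, m ∈ C →
      C ∩ {y : ℕ | y ∈ S} = (C ∩ {y : ℕ | y ∈ S.erase m}) ∪ {m} := by
    intro C hmC
    ext y
    simp only [Set.mem_union, Set.mem_inter_iff, Set.mem_setOf_eq, Finset.mem_erase,
      Set.mem_singleton_iff]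
    constructor
    · rintro ⟨h1, h2⟩
      by_cases hy : y = m
      · exact Or.inr hy
      · exact Or.inl ⟨h1, hy, h2⟩
    · rintro (⟨h1, _, h2⟩ | rfl)
      · exact ⟨h1, h2⟩
      · exact ⟨hmC, hmS⟩
  ext E
  simp only [Set.mem_union, Set.mem_setOf_eq, Set.mem_singleton_iff]
  constructor
  · rintro ⟨C, hC, rfl, hne⟩
    by_cases hmC : m ∈ C
    · rcases hparent C hC hmC with rfl | hWm
      · refine Or.inl (Or.inr ?_)
        rw [Set.inter_eq_left.2 (Set.singleton_subset_iff.2 (by exact hmS))]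
      · refine Or.inr ⟨C ∩ {y : ℕ | y ∈ S.erase m}, ⟨C, hC, rfl, ?_⟩, ?_, hCS2 C hmC⟩
        · exact ⟨x, hWm (Or.inl hxw), hxS'⟩
        · exact Set.inter_subset_inter_left _ (fun y hy => hWm (Or.inl hy))
    · refine Or.inl (Or.inl ⟨⟨C, hC, (hCS C hmC), (hCS C hmC) ▸ hne⟩, ?_⟩)
      rw [hCS C hmC]
      intro hss
      have hxC : x ∈ C := (hss.1 hxD).1
      rcases hlam C hC hxC with h1 | h1
      · exact hss.2 (Set.inter_subset_inter_left _ h1)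
      · by_cases hCW : C = {y | y ∈ w.leafList}
        · subst hCW
          exact hss.2 subset_rfl
        · exact hmC (hsupm C hC h1 hCW)
  · rintro ((⟨⟨C, hC, rfl, hne⟩, hnss⟩ | rfl) | ⟨E0, ⟨C, hC, rfl, hne⟩, hDE, rfl⟩)
    · by_cases hmC : m ∈ C
      · rcases hparent C hC hmC with rfl | hWm
        · exfalso
          obtain ⟨y, hy1, hy2⟩ := hne
          rw [Set.mem_singleton_iff] at hy1
          subst hy1
          exact hmS' hy2
        · have hDC : {y | y ∈ w.leafList} ∩ {y : ℕ | y ∈ S.erase m} ⊆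
              C ∩ {y : ℕ | y ∈ S.erase m} :=
            Set.inter_subset_inter_left _ (fun y hy => hWm (Or.inl hy))
          have hED : C ∩ {y : ℕ | y ∈ S.erase m} =
              {y | y ∈ w.leafList} ∩ {y : ℕ | y ∈ S.erase m} := by
            by_contra hne2
            exact hnss ⟨hDC, fun hsub => hne2 (Set.Subset.antisymm hsub hDC)⟩
          rw [hED, ← hCS _ hmW]
          exact ⟨{y | y ∈ w.leafList}, hWcl, rfl, by rw [hCS _ hmW, ← hED]; exact hne⟩
      · exact ⟨C, hC, (hCS C hmC).symm, (hCS C hmC).symm ▸ hne⟩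
    · obtain ⟨p0, hp0⟩ := exists_leaf_pos t m hmt
      refine ⟨{y | y ∈ (BTree.leaf m).leafList}, (mem_clusters_iff t _).2 ⟨p0, _, hp0, rfl⟩,
        ?_, ⟨m, rfl⟩⟩
      ext z
      simp only [Set.mem_singleton_iff, leafList, List.mem_singleton, Set.mem_inter_iff,
        Set.mem_setOf_eq]
      constructor
      · rintro rfl; exact ⟨rfl, hmS⟩
      · rintro ⟨rfl, _⟩; rfl
    · by_cases hmC : m ∈ C
      · exact ⟨C, hC, (hCS2 C hmC).symm, ⟨m, Or.inr rfl⟩⟩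
      · have hxC : x ∈ C := (hDE hxD).1
        have hED : C ∩ {y : ℕ | y ∈ S.erase m} =
            {y | y ∈ w.leafList} ∩ {y : ℕ | y ∈ S.erase m} := by
          rcases hlam C hC hxC with h1 | h1
          · exact Set.Subset.antisymm (Set.inter_subset_inter_left _ h1) hDE
          · by_cases hCW : C = {y | y ∈ w.leafList}
            · rw [hCW]
            · exact absurd (hsupm C hC h1 hCW) hmC
        rw [hED]
        have hPm : m ∈ ({y | y ∈ w.leafList} ∪ {m} : Set ℕ) := Or.inr rfl
        have h2 := hCS2 _ hPm
        have h3 : ({y | y ∈ w.leafList} ∪ {m} : Set ℕ) ∩ {y : ℕ | y ∈ S.erase m} =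
            {y | y ∈ w.leafList} ∩ {y : ℕ | y ∈ S.erase m} := by
          ext y
          simp only [Set.mem_inter_iff, Set.mem_union, Set.mem_singleton_iff]
          constructor
          · rintro ⟨hy | rfl, h4⟩
            · exact ⟨hy, h4⟩
            · exact absurd h4 hmS'
          · rintro ⟨hy, h4⟩
            exact ⟨Or.inl hy, h4⟩
        refine ⟨{y | y ∈ w.leafList} ∪ {m}, hPcl, ?_, ?_⟩
        · rw [h2, h3]
        · exact ⟨m, Or.inr rfl⟩

end BTree

namespace BTree

lemma chain_mem {t : BTree} {n x : ℕ} (h : t.IsPhylo n) (hx1 : 1 ≤ x) (hxn : x < n)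
    {w : BTree} {q : List Bool} (hq : t.subtreeAt q = some w)
    (hxw : x ∈ w.leafList) (hminw : w.minLeaf < x) :
    (t.olaEntry x).natAbs ∈ w.leafList ∧ (t.olaEntry x).natAbs < x := by
  obtain ⟨tx, w₂, p', hrx, hphyx, hpx, holx, hxw₂, hltw₂⟩ := olaEntry_spec h hx1 hxn
  have hcx : tx.clusters = cInt t (Finset.range (x+1)) := by
    apply clusters_restrictTo
    rw [← restrictLe_eq]
    exact hrx
  have hxr : x ∈ {y : ℕ | y ∈ Finset.range (x+1)} := by
    simp only [Set.mem_setOf_eq, Finset.mem_range]; omega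
  have hminr : w.minLeaf ∈ {y : ℕ | y ∈ Finset.range (x+1)} := by
    simp only [Set.mem_setOf_eq, Finset.mem_range]; omega
  have hCmem : ({y | y ∈ w.leafList} ∩ {y : ℕ | y ∈ Finset.range (x+1)}) ∈ tx.clusters := by
    rw [hcx]
    exact ⟨{y | y ∈ w.leafList}, (mem_clusters_iff t _).2 ⟨q, w, hq, rfl⟩, rfl,
      ⟨x, hxw, hxr⟩⟩
  have hxC : x ∈ {y | y ∈ w.leafList} ∩ {y : ℕ | y ∈ Finset.range (x+1)} := ⟨hxw, hxr⟩
  have hminC : w.minLeaf ∈ {y | y ∈ w.leafList} ∩ {y : ℕ | y ∈ Finset.range (x+1)} :=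
    ⟨minLeaf_mem w, hminr⟩
  rcases parent_cluster tx hphyx.1 p' w₂ x hpx _ hCmem hxC with hCeq | hsub
  · exfalso
    rw [hCeq] at hminC
    rw [Set.mem_singleton_iff] at hminC
    omega
  · have hyC := hsub (Or.inl (natAbs_idx_mem w₂))
    constructor
    · rw [holx]; exact hyC.1
    · rw [holx]; exact hltw₂ _ (natAbs_idx_mem w₂)

lemma key : ∀ n : ℕ, ∀ t₁ t₂ : BTree, ∀ S : Finset ℕ, t₁.IsPhylo n → t₂.IsPhylo n →
    (∀ j ∈ S, j < n) → ∀ hS : S.Nonempty,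
    (∀ j ∈ S, j ≠ S.min' hS →
      t₁.olaEntry j = t₂.olaEntry j ∧ (t₁.olaEntry j).natAbs ∈ S ∧
      ¬(t₁.olaEntry j < 0 ∧ (t₁.olaEntry j).natAbs = S.min' hS)) →
    cInt t₁ S = cInt t₂ S := by
  intro n
  induction n using Nat.strong_induction_on with
  | _ n IH =>
  intro t₁ t₂ S h₁ h₂ hSn hS hH
  rcases Nat.eq_zero_or_pos n with rfl | hn0
  · obtain ⟨j, hj⟩ := hS
    exact absurd (hSn j hj) (Nat.not_lt_zero j)
  set m := n - 1 with hmdef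
  have hmn : m + 1 = n := Nat.succ_pred_eq_of_pos hn0
  by_cases hmS : m ∈ S
  swap
  · -- m ∉ S : reduce
    have hjm : ∀ j ∈ S, j < m := by
      intro j hj
      have h3 := hSn j hj
      have h4 : j ≠ m := fun he => hmS (he ▸ hj)
      omega
    have hm1 : 1 ≤ m := by
      obtain ⟨j, hj⟩ := hS
      have := hjm j hj
      omega
    obtain ⟨t₁', ht₁', hp₁'⟩ := restrict_phylo h₁ hm1 (by omega)
    obtain ⟨t₂', ht₂', hp₂'⟩ := restrict_phylo h₂ hm1 (by omega)
    rw [← cInt_restrict ht₁' hjm, ← cInt_restrict ht₂' hjm]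
    refine IH m (by omega) t₁' t₂' S hp₁' hp₂' hjm hS ?_
    intro j hj hjne
    obtain ⟨e1, e2, e3⟩ := hH j hj hjne
    rw [olaEntry_restrict ht₁' (hjm j hj), olaEntry_restrict ht₂' (hjm j hj)]
    exact ⟨e1, e2, e3⟩
  by_cases hS' : (S.erase m).Nonempty
  swap
  · -- S = {m}
    have hmem₁ : m ∈ t₁.leafList := (mem_leafList_phylo h₁).2 (by omega)
    have hmem₂ : m ∈ t₂.leafList := (mem_leafList_phylo h₂).2 (by omega)
    have hSeq : S = {m} := by
      ext j
      simp only [Finset.mem_singleton]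
      constructor
      · intro hj
        by_contra hne
        exact hS' ⟨j, Finset.mem_erase.2 ⟨hne, hj⟩⟩
      · rintro rfl; exact hmS
    rw [hSeq, cInt_singleton hmem₁, cInt_singleton hmem₂]
  -- MAIN CASE
  have hjm : ∀ j ∈ S.erase m, j < m := by
    intro j hj
    rw [Finset.mem_erase] at hj
    have h3 := hSn j hj.2
    have h4 := hj.1
    omega
  have hm1 : 1 ≤ m := by
    obtain ⟨j, hj⟩ := hS'
    have := hjm j hj
    omega
  have hminm : S.min' hS < m := by
    obtain ⟨j, hj⟩ := hS'
    exact lt_of_le_of_lt (Finset.min'_le S j (Finset.mem_erase.1 hj).2) (hjm j hj)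
  have hmne : m ≠ S.min' hS := by omega
  obtain ⟨hz12, hzS, hznotmin⟩ := hH m hmS hmne
  have hxlt : (t₁.olaEntry m).natAbs < m := olaEntry_bound h₁ hm1 (by omega)
  set x := (t₁.olaEntry m).natAbs with hxdef
  have hxS' : x ∈ S.erase m := Finset.mem_erase.2 ⟨by omega, hzS⟩
  obtain ⟨tj₁, w₁, p₁, hr₁, hpj₁, hp₁, hol₁, hmw₁, hltw₁⟩ := olaEntry_spec h₁ hm1 (by omega)
  obtain ⟨tj₂, w₂, p₂, hr₂, hpj₂, hp₂, hol₂, hmw₂, hltw₂⟩ := olaEntry_spec h₂ hm1 (by omega)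
  have htj₁ : tj₁ = t₁ := by
    rw [restrictLe_eq, hmn, restrictTo_all t₁ _
      (fun y hy => Finset.mem_range.2 ((mem_leafList_phylo h₁).1 hy))] at hr₁
    exact (Option.some_inj.1 hr₁).symm
  have htj₂ : tj₂ = t₂ := by
    rw [restrictLe_eq, hmn, restrictTo_all t₂ _
      (fun y hy => Finset.mem_range.2 ((mem_leafList_phylo h₂).1 hy))] at hr₂
    exact (Option.some_inj.1 hr₂).symm
  rw [htj₁] at hp₁
  rw [htj₂] at hp₂
  have hnw₁ : w₁.leafList.Nodup := by
    rcases hp₁ with hp | hp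
    · exact (nodup_children (nodup_of_subtreeAt hp h₁.1)).2
    · exact (nodup_children (nodup_of_subtreeAt hp h₁.1)).1
  have hnw₂ : w₂.leafList.Nodup := by
    rcases hp₂ with hp | hp
    · exact (nodup_children (nodup_of_subtreeAt hp h₂.1)).2
    · exact (nodup_children (nodup_of_subtreeAt hp h₂.1)).1
  have hx1mem : x ∈ w₁.leafList := by
    rw [hxdef, hol₁]; exact natAbs_idx_mem w₁
  have hx2mem : x ∈ w₂.leafList := by
    rw [hxdef, hz12, hol₂]; exact natAbs_idx_mem w₂
  have hq₁ : ∃ q, t₁.subtreeAt q = some w₁ := by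
    rcases hp₁ with hp | hp
    · exact ⟨p₁ ++ [true], by rw [subtreeAt_append, hp]; simp [subtreeAt, subtreeAt_nil]⟩
    · exact ⟨p₁ ++ [false], by rw [subtreeAt_append, hp]; simp [subtreeAt, subtreeAt_nil]⟩
  have hq₂ : ∃ q, t₂.subtreeAt q = some w₂ := by
    rcases hp₂ with hp | hp
    · exact ⟨p₂ ++ [true], by rw [subtreeAt_append, hp]; simp [subtreeAt, subtreeAt_nil]⟩
    · exact ⟨p₂ ++ [false], by rw [subtreeAt_append, hp]; simp [subtreeAt, subtreeAt_nil]⟩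
  have hstep₁ := step_formula t₁ h₁.1 m S hmS p₁ w₁ hp₁ x hx1mem hxS'
  have hstep₂ := step_formula t₂ h₂.1 m S hmS p₂ w₂ hp₂ x hx2mem hxS'
  have hminS' : (S.erase m).min' hS' = S.min' hS := by
    apply le_antisymm
    · exact Finset.min'_le _ _ (Finset.mem_erase.2 ⟨by omega, S.min'_mem hS⟩)
    · exact Finset.min'_le _ _ (Finset.mem_erase.1 ((S.erase m).min'_mem hS')).2
  obtain ⟨t₁', ht₁', hpp₁'⟩ := restrict_phylo h₁ hm1 (by omega)
  obtain ⟨t₂', ht₂', hpp₂'⟩ := restrict_phylo h₂ hm1 (by omega)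
  have hIH : cInt t₁ (S.erase m) = cInt t₂ (S.erase m) := by
    rw [← cInt_restrict ht₁' hjm, ← cInt_restrict ht₂' hjm]
    refine IH m (by omega) t₁' t₂' (S.erase m) hpp₁' hpp₂' hjm hS' ?_
    intro j hj hjne
    rw [hminS'] at hjne
    have hjS : j ∈ S := (Finset.mem_erase.1 hj).2
    obtain ⟨e1, e2, e3⟩ := hH j hjS hjne
    have hj1 : 1 ≤ j := by
      have h5 := Finset.min'_le S j hjS
      have h6 : S.min' hS ≠ j := fun he => hjne he.symm
      omega
    have hb : (t₁.olaEntry j).natAbs < j := olaEntry_bound h₁ hj1 (hSn j hjS)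
    rw [olaEntry_restrict ht₁' (hjm j hj), olaEntry_restrict ht₂' (hjm j hj), hminS']
    refine ⟨e1, Finset.mem_erase.2 ⟨by have := hjm j hj; omega, e2⟩, e3⟩
  have hDeq : {y | y ∈ w₁.leafList} ∩ {y : ℕ | y ∈ S.erase m} =
      {y | y ∈ w₂.leafList} ∩ {y : ℕ | y ∈ S.erase m} := by
    rcases lt_or_ge w₁.idx 0 with hzneg | hznn
    · -- internal case
      obtain ⟨a₁, b₁, hw₁n⟩ : ∃ a b, w₁ = .node a b := by
        cases w₁ with
        | leaf y => simp [idx] at hzneg; omega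
        | node a b => exact ⟨a, b, rfl⟩
      obtain ⟨a₂, b₂, hw₂n⟩ : ∃ a b, w₂ = .node a b := by
        have : w₂.idx < 0 := by rw [← hol₂, ← hz12, hol₁]; exact hzneg
        cases w₂ with
        | leaf y => simp [idx] at this; omega
        | node a b => exact ⟨a, b, rfl⟩
      have hxmax₁ : max a₁.minLeaf b₁.minLeaf = x := by
        rw [hxdef, hol₁, hw₁n, idx_node, Int.natAbs_neg, Int.natAbs_natCast]
      have hxmax₂ : max a₂.minLeaf b₂.minLeaf = x := by
        rw [hxdef, hz12, hol₂, hw₂n, idx_node, Int.natAbs_neg, Int.natAbs_natCast]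
      have hminw₁ : w₁.minLeaf < x := by
        rw [hw₁n, minLeaf_node, ← hxmax₁]
        exact minLeaf_lt_max (hw₁n ▸ hnw₁)
      have hminw₂ : w₂.minLeaf < x := by
        rw [hw₂n, minLeaf_node, ← hxmax₂]
        exact minLeaf_lt_max (hw₂n ▸ hnw₂)
      -- chain element y
      have hxne : x ≠ S.min' hS := by
        intro he
        refine hznotmin ⟨?_, he⟩
        rw [hol₁]
        exact hzneg
      have hxS : x ∈ S := (Finset.mem_erase.1 hxS').2
      obtain ⟨f1, f2, _⟩ := hH x hxS hxne
      have hx1 : 1 ≤ x := by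
        have h5 := Finset.min'_le S x hxS
        omega
      obtain ⟨q₁, hq₁'⟩ := hq₁
      obtain ⟨q₂, hq₂'⟩ := hq₂
      have hchain₁ := chain_mem h₁ hx1 (by omega) hq₁' hx1mem hminw₁
      have hchain₂ := chain_mem h₂ hx1 (by omega) hq₂' hx2mem hminw₂
      set y := (t₁.olaEntry x).natAbs with hydef
      have hy2 : (t₂.olaEntry x).natAbs = y := by rw [← f1]
      rw [hy2] at hchain₂
      have hyS' : y ∈ S.erase m :=
        Finset.mem_erase.2 ⟨by have := hchain₁.2; omega, f2⟩
      have hyD₁ : y ∈ {y | y ∈ w₁.leafList} ∩ {y : ℕ | y ∈ S.erase m} :=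
        ⟨hchain₁.1, hyS'⟩
      have hyD₂ : y ∈ {y | y ∈ w₂.leafList} ∩ {y : ℕ | y ∈ S.erase m} :=
        ⟨hchain₂.1, hyS'⟩
      have hD₁mem : {y | y ∈ w₁.leafList} ∩ {y : ℕ | y ∈ S.erase m} ∈ cInt t₁ (S.erase m) :=
        ⟨{y | y ∈ w₁.leafList}, (mem_clusters_iff t₁ _).2 ⟨q₁, w₁, hq₁', rfl⟩, rfl,
          ⟨x, hx1mem, hxS'⟩⟩
      have hD₂mem : {y | y ∈ w₂.leafList} ∩ {y : ℕ | y ∈ S.erase m} ∈ cInt t₂ (S.erase m) :=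
        ⟨{y | y ∈ w₂.leafList}, (mem_clusters_iff t₂ _).2 ⟨q₂, w₂, hq₂', rfl⟩, rfl,
          ⟨x, hx2mem, hxS'⟩⟩
      apply Set.Subset.antisymm
      · -- D₁ ⊆ D₂ : view D₂ as a cluster-intersection of t₁
        have hD₂mem' : {y | y ∈ w₂.leafList} ∩ {y : ℕ | y ∈ S.erase m} ∈
            cInt t₁ (S.erase m) := by rw [hIH]; exact hD₂mem
        obtain ⟨C, hC, hEC, _⟩ := hD₂mem'
        have hxC : x ∈ C := by
          have : x ∈ {y | y ∈ w₂.leafList} ∩ {y : ℕ | y ∈ S.erase m} := ⟨hx2mem, hxS'⟩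
          rw [hEC] at this
          exact this.1
        have hyC : ∃ z ∈ C, z < max a₁.minLeaf b₁.minLeaf := by
          refine ⟨y, ?_, by rw [hxmax₁]; exact hchain₁.2⟩
          have := hyD₂
          rw [hEC] at this
          exact this.1
        have hsub := secondmin_cluster_min t₁ h₁.1 q₁ a₁ b₁ (hw₁n ▸ hq₁') C hC
          (by rw [hxmax₁]; exact hxC) hyC
        rw [hEC]
        intro z hz
        refine ⟨hsub ?_, hz.2⟩
        rw [← hw₁n]
        exact hz.1
      · have hD₁mem' : {y | y ∈ w₁.leafList} ∩ {y : ℕ | y ∈ S.erase m} ∈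
            cInt t₂ (S.erase m) := by rw [← hIH]; exact hD₁mem
        obtain ⟨C, hC, hEC, _⟩ := hD₁mem'
        have hxC : x ∈ C := by
          have : x ∈ {y | y ∈ w₁.leafList} ∩ {y : ℕ | y ∈ S.erase m} := ⟨hx1mem, hxS'⟩
          rw [hEC] at this
          exact this.1
        have hyC : ∃ z ∈ C, z < max a₂.minLeaf b₂.minLeaf := by
          refine ⟨y, ?_, by rw [hxmax₂]; exact hchain₂.2⟩
          have := hyD₁
          rw [hEC] at this
          exact this.1
        have hsub := secondmin_cluster_min t₂ h₂.1 q₂ a₂ b₂ (hw₂n ▸ hq₂') C hC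
          (by rw [hxmax₂]; exact hxC) hyC
        rw [hEC]
        intro z hz
        refine ⟨hsub ?_, hz.2⟩
        rw [← hw₂n]
        exact hz.1
    · -- leaf case
      have hw₁x : w₁ = .leaf x := by
        cases w₁ with
        | leaf y =>
          have : (y : ℤ).natAbs = x := by rw [hxdef, hol₁]; rfl
          simp at this
          rw [this]
        | node a b => exact absurd (idx_node_neg hnw₁) (not_lt.2 hznn)
      have hw₂x : w₂ = .leaf x := by
        have hzn2 : 0 ≤ w₂.idx := by rw [← hol₂, ← hz12, hol₁]; exact hznn
        cases w₂ with
        | leaf y =>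
          have : (y : ℤ).natAbs = x := by rw [hxdef, hz12, hol₂]; rfl
          simp at this
          rw [this]
        | node a b => exact absurd (idx_node_neg hnw₂) (not_lt.2 hzn2)
      rw [hw₁x, hw₂x]
  rw [hstep₁, hstep₂, hIH, hDeq]

end BTree

lemma mismatch_mem_le {ι : Type*} (vf : ι → ℕ → ℤ) : ∀ i j, j ∈ mismatch vf i →
    1 ≤ j ∧ j ≤ i
  | 0, j => by simp [mismatch]
  | i+1, j => by
    simp only [mismatch]
    split_ifs with h
    · intro hj
      rcases Finset.mem_insert.1 hj with rfl | hj
      · omega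
      · have := mismatch_mem_le vf i j hj; omega
    · intro hj
      have := mismatch_mem_le vf i j hj; omega

lemma mismatch_mono_le {ι : Type*} (vf : ι → ℕ → ℤ) : ∀ {i i' : ℕ}, i ≤ i' →
    mismatch vf i ⊆ mismatch vf i' := by
  intro i i' h
  induction i' with
  | zero =>
    have : i = 0 := by omega
    subst this; exact subset_rfl
  | succ k IHk =>
    rcases Nat.eq_or_lt_of_le h with rfl | hlt
    · exact subset_rfl
    · refine (IHk (by omega)).trans ?_
      intro j hj
      simp only [mismatch]
      split_ifs with hc
      · exact Finset.mem_insert_of_mem hj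
      · exact hj

lemma mismatch_of_le {ι : Type*} (vf : ι → ℕ → ℤ) : ∀ (i' i j : ℕ), j ∈ mismatch vf i' →
    j ≤ i → i ≤ i' → j ∈ mismatch vf i
  | 0, i, j => by simp [mismatch]
  | i'+1, i, j => fun hj hji hii' => by
    rcases Nat.eq_or_lt_of_le hii' with rfl | hlt
    · exact hj
    · have hi : i ≤ i' := by omega
      simp only [mismatch] at hj
      split_ifs at hj with h
      · rcases Finset.mem_insert.1 hj with rfl | hj
        · omega
        · exact mismatch_of_le vf i' i j hj hji hi
      · exact mismatch_of_le vf i' i j hj hji hi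

lemma consensus {ι : Type*} (vf : ι → ℕ → ℤ) {N j : ℕ} (hj1 : 1 ≤ j) (hjN : j ≤ N)
    (hjM : j ∉ mismatch vf N) :
    (∀ a b : ι, vf a j = vf b j) ∧
    (∀ j' ∈ mismatch vf N, j' < j → ∀ a : ι, vf a j ≠ -(j' : ℤ)) := by
  have hj' : j ∉ mismatch vf j := fun h => hjM (mismatch_mono_le vf hjN h)
  obtain ⟨k, rfl⟩ : ∃ k, j = k + 1 := ⟨j - 1, by omega⟩
  simp only [mismatch] at hj'
  split_ifs at hj' with hc
  · exact absurd (Finset.mem_insert_self _ _) hj'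
  · push_neg at hc
    obtain ⟨hc1, hc2⟩ := hc
    refine ⟨hc1, ?_⟩
    intro j' hj'M hj'lt a heq
    have hj'k : j' ∈ mismatch vf k := mismatch_of_le vf N k j' hj'M (by omega) (by omega)
    obtain ⟨b, hb⟩ := hc2 j' hj'k
    exact hb ((hc1 b a).trans heq)

lemma belongs_le (M : Finset ℕ) (v : ℕ → ℤ) : ∀ j, belongs M v j ≤ M.card := by
  intro j
  induction j using Nat.strong_induction_on with
  | _ j IHj =>
  rw [belongs]
  split_ifs with h1 h2
  · exact Finset.card_filter_le _ _
  · exact IHj _ h2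
  · omega

lemma rank_sorted (M : Finset ℕ) {i : ℕ} (hi : i < (M.sort (· ≤ ·)).length) :
    (M.filter (· ≤ (M.sort (· ≤ ·)).get ⟨i, hi⟩)).card = i + 1 := by
  classical
  set L := M.sort (· ≤ ·) with hL
  have hnd : L.Nodup := M.sort_nodup _
  have hstrict : L.SortedLT := M.sortedLT_sort
  have hmono : StrictMono L.get := hstrict.strictMono_get
  have hset : M.filter (· ≤ L.get ⟨i, hi⟩) = (L.take (i+1)).toFinset := by
    ext j
    rw [Finset.mem_filter, List.mem_toFinset, List.mem_take_iff_getElem]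
    constructor
    · rintro ⟨hjM, hjle⟩
      have hjL : j ∈ L := (Finset.mem_sort _).2 hjM
      obtain ⟨⟨k, hk⟩, hkj⟩ := List.mem_iff_get.1 hjL
      have hki : k ≤ i := by
        by_contra hgt
        have hlt : L.get ⟨i, hi⟩ < L.get ⟨k, hk⟩ :=
          hmono (by simp only [Fin.mk_lt_mk]; omega)
        rw [hkj] at hlt
        omega
      refine ⟨k, lt_min_iff.mpr ⟨by omega, hk⟩, ?_⟩
      rw [← List.get_eq_getElem (l := L) (i := ⟨k, hk⟩)]
      exact hkj
    · rintro ⟨k, hk, rfl⟩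
      obtain ⟨hk1, hk2⟩ := lt_min_iff.mp hk
      rw [← List.get_eq_getElem (l := L) (i := ⟨k, hk2⟩)]
      constructor
      · exact (Finset.mem_sort _).1 (List.get_mem _ _)
      · rcases Nat.lt_or_ge k i with hki | hki
        · exact (hmono (show (⟨k, hk2⟩ : Fin L.length) < ⟨i, hi⟩ by
            simp only [Fin.mk_lt_mk]; omega)).le
        · have : k = i := by omega
          subst this
          exact le_refl _
  rw [hset, List.toFinset_card_of_nodup (hnd.sublist (List.take_sublist _ _)),
    List.length_take]
  omega

lemma mVal_spec (M : Finset ℕ) {i : ℕ} (hi1 : 1 ≤ i) (hik : i ≤ M.card) :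
    mVal M i ∈ M ∧ (M.filter (· ≤ mVal M i)).card = i := by
  have hlen : (M.sort (· ≤ ·)).length = M.card := Finset.length_sort _
  have hi : i - 1 < (M.sort (· ≤ ·)).length := by omega
  have hget : mVal M i = (M.sort (· ≤ ·)).get ⟨i-1, hi⟩ := by
    rw [mVal, if_neg (by omega : ¬ i = 0)]
    exact List.getD_eq_get _ _ ⟨i-1, hi⟩
  constructor
  · rw [hget]
    exact (Finset.mem_sort _).1 (List.get_mem _ _)
  · rw [hget, rank_sorted M hi]
    omega

lemma rank_lt (M : Finset ℕ) {j j' : ℕ} (hj' : j' ∈ M) (hlt : j < j') :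
    (M.filter (· ≤ j)).card < (M.filter (· ≤ j')).card := by
  classical
  apply Finset.card_lt_card
  constructor
  · intro z hz
    rw [Finset.mem_filter] at hz ⊢
    exact ⟨hz.1, by omega⟩
  · intro hsub
    have := hsub (Finset.mem_filter.2 ⟨hj', le_refl j'⟩)
    rw [Finset.mem_filter] at this
    omega

lemma rank_inj (M : Finset ℕ) {j j' : ℕ} (hj : j ∈ M) (hj' : j' ∈ M)
    (h : (M.filter (· ≤ j)).card = (M.filter (· ≤ j')).card) : j = j' := by
  rcases lt_trichotomy j j' with hlt | he | hlt
  · have := rank_lt M hj' hlt; omega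
  · exact he
  · have := rank_lt M hj hlt; omega

lemma belongs_ge (M : Finset ℕ) (v : ℕ → ℤ) {i : ℕ} (hi1 : 1 ≤ i) (hik : i ≤ M.card) :
    ∀ j, belongs M v j = i → mVal M i ≤ j := by
  intro j
  induction j using Nat.strong_induction_on with
  | _ j IHj =>
  intro hj
  rw [belongs] at hj
  split_ifs at hj with h1 h2
  · obtain ⟨hm1, hm2⟩ := mVal_spec M hi1 hik
    have := rank_inj M h1 hm1 (by rw [hj, hm2])
    omega
  · have := IHj _ h2 hj
    omega
  · omega

/-- Lemma 2: the sets `L_0, …, L_k` of the lower-bound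
construction partition the leaf set, and for each `i` the nodes of `T|_{L_i}`
are bijectively indexed by `span(L_i)`, identically across all trees. -/
theorem stmt9 {ι : Type} [Fintype ι] [Nonempty ι] (n : ℕ)
    (ts : ι → BTree) (hts : ∀ a, (ts a).IsPhylo n)
    (σ : Equiv.Perm ℕ) (hσ : IsOrdering σ n) (a₀ : ι) :
    let v : ℕ → ℤ := fun j => ola (ts a₀) σ j
    let M : Finset ℕ := mismatch (fun a => ola (ts a) σ) (n - 1)
    let P : ℕ → Finset ℕ := fun i => (Finset.range n).filter (fun j => belongs M v j = i)
    let span : ℕ → Set ℤ := fun i =>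
      {z | z = (mVal M i : ℤ) ∨ (z.natAbs ∈ P i ∧ z.natAbs ≠ mVal M i)}
    ((Finset.range (M.card + 1)).biUnion P = Finset.range n) ∧
    (∀ i j : ℕ, i ≠ j → Disjoint (P i) (P j)) ∧
    (∀ a : ι, ∀ i ≤ M.card, ∃ t' : BTree,
      ((ts a).relabel σ).restrictTo (P i) = some t' ∧
      (∀ u : BTree, t'.IsNode u → u.idx ∈ span i) ∧
      (∀ z ∈ span i, ∃! p : List Bool, ∃ u, t'.subtreeAt p = some u ∧ u.idx = z)) ∧
    (∀ a b : ι, ∀ i ≤ M.card, ∀ ta tb u ub,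
      ((ts a).relabel σ).restrictTo (P i) = some ta →
      ((ts b).relabel σ).restrictTo (P i) = some tb →
      ta.IsNode u → tb.IsNode ub → u.idx = ub.idx → u.leafSet = ub.leafSet) := by
  classical
  intro v M P span
  have hv : ∀ j, v j = ((ts a₀).relabel σ).olaEntry j := fun _ => rfl
  have hT : ∀ a : ι, ((ts a).relabel σ).IsPhylo n := fun a => relabel_phylo (hts a) hσ
  rcases Nat.eq_zero_or_pos n with rfl | hn0
  · exfalso
    obtain ⟨y, hy⟩ := List.exists_mem_of_ne_nil _ (BTree.leafList_ne_nil (ts a₀))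
    exact Nat.not_lt_zero y ((BTree.mem_leafList_phylo (hts a₀)).1 hy)
  have hMle : ∀ j ∈ M, 1 ≤ j ∧ j ≤ n - 1 := fun j hj => mismatch_mem_le _ _ j hj
  have hPsub : ∀ i, ∀ j ∈ P i, j < n := by
    intro i j hj
    exact Finset.mem_range.1 (Finset.mem_filter.1 hj).1
  have hPbel : ∀ i, ∀ j ∈ P i, belongs M v j = i := fun i j hj => (Finset.mem_filter.1 hj).2
  have hPmem : ∀ i j, j < n → belongs M v j = i → j ∈ P i := by
    intro i j hjn hb
    exact Finset.mem_filter.2 ⟨Finset.mem_range.2 hjn, hb⟩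
  have h0M : (0 : ℕ) ∉ M := fun h0 => by have := (hMle 0 h0).1; omega
  have hmval0 : mVal M 0 = 0 := by simp [mVal]
  have hmval : ∀ i ≤ M.card, mVal M i ∈ P i ∧ (∀ j ∈ P i, mVal M i ≤ j) := by
    intro i hik
    rcases Nat.eq_zero_or_pos i with rfl | hi1
    · constructor
      · refine hPmem 0 0 hn0 ?_
        rw [belongs, if_neg h0M, dif_neg (Nat.not_lt_zero _)]
      · intro j _
        rw [hmval0]
        omega
    · obtain ⟨hmem, hrank⟩ := mVal_spec M hi1 hik
      have hmn' : mVal M i < n := by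
        have := (hMle _ hmem).2; omega
      constructor
      · refine hPmem i _ hmn' ?_
        rw [belongs, if_pos hmem, hrank]
      · intro j hj
        exact belongs_ge M v hi1 hik j (hPbel i j hj)
  have hPM : ∀ i, ∀ j ∈ P i, j ≠ mVal M i → j ∉ M := by
    intro i j hj hne hjM
    have hb : belongs M v j = i := hPbel i j hj
    rw [belongs, if_pos hjM] at hb
    have hpos : 1 ≤ (M.filter (· ≤ j)).card :=
      Finset.card_pos.2 ⟨j, Finset.mem_filter.2 ⟨hjM, le_refl j⟩⟩
    have hi1 : 1 ≤ i := by omega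
    have hik : i ≤ M.card := by rw [← hb]; exact Finset.card_filter_le _ _
    obtain ⟨hm1, hm2⟩ := mVal_spec M hi1 hik
    exact hne (rank_inj M hjM hm1 (by rw [hb, hm2]))
  have hclosure : ∀ i, ∀ j ∈ P i, j ≠ mVal M i →
      1 ≤ j ∧ (v j).natAbs < j ∧ (v j).natAbs ∈ P i ∧ j ∉ M := by
    intro i j hj hne
    have hjM : j ∉ M := hPM i j hj hne
    have hj1 : 1 ≤ j := by
      rcases Nat.eq_zero_or_pos j with rfl | h
      · exfalso
        have hb := hPbel i 0 hj
        rw [belongs, if_neg hjM, dif_neg (Nat.not_lt_zero _)] at hb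
        exact hne (by rw [← hb, hmval0])
      · exact h
    have hbd : (v j).natAbs < j := by
      rw [hv j]
      exact BTree.olaEntry_bound (hT a₀) hj1 (hPsub i j hj)
    have hb := hPbel i j hj
    rw [belongs, if_neg hjM, dif_pos hbd] at hb
    exact ⟨hj1, hbd, hPmem i _ (lt_trans hbd (hPsub i j hj)) hb, hjM⟩
  have hagree : ∀ j, 1 ≤ j → j < n → j ∉ M → ∀ a b : ι,
      ((ts a).relabel σ).olaEntry j = ((ts b).relabel σ).olaEntry j := by
    intro j hj1 hjn hjM a b
    exact (consensus (fun a => ola (ts a) σ) hj1 (by omega) hjM).1 a b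
  have hnotmval : ∀ j, 1 ≤ j → j < n → j ∉ M → ∀ j' ∈ M, j' < j →
      ∀ a : ι, ((ts a).relabel σ).olaEntry j ≠ -(j' : ℤ) := by
    intro j hj1 hjn hjM j' hj' hlt a
    exact (consensus (fun a => ola (ts a) σ) hj1 (by omega) hjM).2 j' hj' hlt a
  have hPne : ∀ i ≤ M.card, (P i).Nonempty := fun i hik => ⟨_, (hmval i hik).1⟩
  have hSfacts : ∀ i, ∀ hik : i ≤ M.card, ∀ hne : (P i).Nonempty,
      (P i).min' hne = mVal M i := by
    intro i hik hne
    apply le_antisymm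
    · exact Finset.min'_le _ _ (hmval i hik).1
    · exact (hmval i hik).2 _ ((P i).min'_mem hne)
  have hrestr : ∀ (a : ι), ∀ i ≤ M.card, ∃ t',
      ((ts a).relabel σ).restrictTo (P i) = some t' ∧
      (∀ y, y ∈ t'.leafList ↔ y ∈ P i) ∧ t'.leafList.Nodup ∧ t'.minLeaf = mVal M i := by
    intro a i hik
    have hm_in : mVal M i ∈ ((ts a).relabel σ).leafList :=
      (BTree.mem_leafList_phylo (hT a)).2 (hPsub i _ (hmval i hik).1)
    obtain ⟨t', ht'⟩ := BTree.restrictTo_some hm_in (hmval i hik).1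
    have hmemiff : ∀ y, y ∈ t'.leafList ↔ y ∈ P i := by
      intro y
      rw [BTree.mem_restrictTo_leafList ht']
      constructor
      · rintro ⟨_, h⟩; exact h
      · intro h; exact ⟨(BTree.mem_leafList_phylo (hT a)).2 (hPsub i y h), h⟩
    refine ⟨t', ht', hmemiff, ?_, ?_⟩
    · rw [BTree.restrictTo_leafList ht']
      exact (hT a).1.filter _
    · apply le_antisymm
      · exact BTree.minLeaf_le _ _ ((hmemiff _).2 (hmval i hik).1)
      · exact (hmval i hik).2 _ ((hmemiff _).1 (BTree.minLeaf_mem t'))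
  have hclus : ∀ (a b : ι), ∀ i ≤ M.card,
      BTree.cInt ((ts a).relabel σ) (P i) = BTree.cInt ((ts b).relabel σ) (P i) := by
    intro a b i hik
    refine BTree.key n _ _ (P i) (hT a) (hT b) (hPsub i) (hPne i hik) ?_
    intro j hj hjne
    rw [hSfacts i hik (hPne i hik)] at hjne
    obtain ⟨hj1, hbd, hmem, hjM⟩ := hclosure i j hj hjne
    have hjn := hPsub i j hj
    have hagab := hagree j hj1 hjn hjM
    refine ⟨hagab a b, ?_, ?_⟩
    · rw [hagab a a₀]
      exact hmem
    · rw [hSfacts i hik (hPne i hik)]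
      rintro ⟨hneg, habs⟩
      rw [hagab a a₀] at hneg habs
      rcases Nat.eq_zero_or_pos i with rfl | hi1
      · rw [hmval0] at habs
        have h0 : ((ts a₀).relabel σ).olaEntry j = 0 := Int.natAbs_eq_zero.1 habs
        omega
      · have hmvM : mVal M i ∈ M := (mVal_spec M hi1 hik).1
        have hlt : mVal M i < j := by
          have := (hmval i hik).2 j hj
          omega
        refine hnotmval j hj1 hjn hjM _ hmvM hlt a₀ ?_
        rcases Int.natAbs_eq (((ts a₀).relabel σ).olaEntry j) with he | he
        · have hge : (0:ℤ) ≤ ((ts a₀).relabel σ).olaEntry j := by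
            rw [he]; exact Int.natCast_nonneg _
          omega
        · rw [he, habs]
  refine ⟨?_, ?_, ?_, ?_⟩
  · apply Finset.Subset.antisymm
    · intro j hj
      rw [Finset.mem_biUnion] at hj
      obtain ⟨i, _, hji⟩ := hj
      exact (Finset.mem_filter.1 hji).1
    · intro j hj
      rw [Finset.mem_biUnion]
      exact ⟨belongs M v j, Finset.mem_range.2 (Nat.lt_succ_of_le (belongs_le M v j)),
        Finset.mem_filter.2 ⟨hj, rfl⟩⟩
  · intro i j hij
    rw [Finset.disjoint_left]
    intro z hzi hzj
    exact hij ((Finset.mem_filter.1 hzi).2.symm.trans (Finset.mem_filter.1 hzj).2)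
  · intro a i hik
    obtain ⟨t', ht', hmemiff, hnd, hmin⟩ := hrestr a i hik
    refine ⟨t', ht', ?_, ?_⟩
    · rintro u ⟨p, hp⟩
      cases u with
      | leaf y =>
        have hy : y ∈ P i :=
          (hmemiff y).1 (BTree.mem_of_subtreeAt hp (by simp [BTree.leafList]))
        by_cases hym : y = mVal M i
        · exact Or.inl (by rw [hym]; rfl)
        · refine Or.inr ⟨?_, ?_⟩
          · show ((y : ℤ)).natAbs ∈ P i
            rw [Int.natAbs_natCast]
            exact hy
          · show ((y : ℤ)).natAbs ≠ mVal M i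
            rw [Int.natAbs_natCast]
            exact hym
      | node ul ur =>
        have hnu : (BTree.node ul ur).leafList.Nodup := BTree.nodup_of_subtreeAt hp hnd
        have hxmem : max ul.minLeaf ur.minLeaf ∈ (BTree.node ul ur).leafList :=
          BTree.max_minLeaf_mem ul ur
        have hxP : max ul.minLeaf ur.minLeaf ∈ P i :=
          (hmemiff _).1 (BTree.mem_of_subtreeAt hp hxmem)
        have hminu : (BTree.node ul ur).minLeaf < max ul.minLeaf ur.minLeaf := by
          rw [BTree.minLeaf_node]; exact BTree.minLeaf_lt_max hnu
        have hminmem : (BTree.node ul ur).minLeaf ∈ t'.leafList :=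
          BTree.mem_of_subtreeAt hp (BTree.minLeaf_mem _)
        have hge : mVal M i ≤ (BTree.node ul ur).minLeaf := by
          rw [← hmin]; exact BTree.minLeaf_le t' _ hminmem
        have hnabs : (BTree.node ul ur).idx.natAbs = max ul.minLeaf ur.minLeaf := by
          rw [BTree.idx_node, Int.natAbs_neg, Int.natAbs_natCast]
        refine Or.inr ⟨?_, ?_⟩
        · rw [hnabs]; exact hxP
        · rw [hnabs]; omega
    · intro z hz
      have hz' : z = ((mVal M i : ℕ) : ℤ) ∨ (z.natAbs ∈ P i ∧ z.natAbs ≠ mVal M i) := hz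
      have hex : ∃ p u, t'.subtreeAt p = some u ∧ u.idx = z := by
        rcases hz' with hz1 | ⟨hzP, hzne⟩
        · obtain ⟨p, hp⟩ := BTree.exists_leaf_pos t' _ ((hmemiff _).2 (hmval i hik).1)
          exact ⟨p, _, hp, hz1.symm⟩
        · have hxmem : z.natAbs ∈ t'.leafList := (hmemiff _).2 hzP
          rcases Int.natAbs_eq z with he | he
          · obtain ⟨p, hp⟩ := BTree.exists_leaf_pos t' _ hxmem
            exact ⟨p, _, hp, he.symm⟩
          · have hne2 : z.natAbs ≠ t'.minLeaf := by rw [hmin]; exact hzne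
            obtain ⟨p, u, hp, hidx⟩ := BTree.exists_secondmin t' _ hxmem hne2
            exact ⟨p, u, hp, hidx.trans he.symm⟩
      obtain ⟨p, u, hp, hidx⟩ := hex
      refine ⟨p, ⟨u, hp, hidx⟩, ?_⟩
      rintro p' ⟨u', hp', hidx'⟩
      exact BTree.subtreeAt_idx_inj t' hnd p' p u' u hp' hp (by rw [hidx', hidx])
  · rintro a b i hik ta tb u ub hta htb ⟨pu, hpu⟩ ⟨pb, hpb⟩ hidx
    have hca : ta.clusters = BTree.cInt ((ts a).relabel σ) (P i) :=
      BTree.clusters_restrictTo _ _ _ hta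
    have hcb : tb.clusters = BTree.cInt ((ts b).relabel σ) (P i) :=
      BTree.clusters_restrictTo _ _ _ htb
    have hclusab : ta.clusters = tb.clusters := by rw [hca, hcb, hclus a b i hik]
    have hnda : ta.leafList.Nodup := by
      rw [BTree.restrictTo_leafList hta]; exact (hT a).1.filter _
    have hndb : tb.leafList.Nodup := by
      rw [BTree.restrictTo_leafList htb]; exact (hT b).1.filter _
    have hnu : u.leafList.Nodup := BTree.nodup_of_subtreeAt hpu hnda
    have hnb : ub.leafList.Nodup := BTree.nodup_of_subtreeAt hpb hndb
    rcases lt_or_ge u.idx 0 with hneg | hpos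
    · obtain ⟨u1, u2, rfl⟩ : ∃ c d, u = .node c d := by
        cases u with
        | leaf y => simp [BTree.idx] at hneg; omega
        | node c d => exact ⟨c, d, rfl⟩
      have hnegb : ub.idx < 0 := hidx ▸ hneg
      obtain ⟨b1, b2, rfl⟩ : ∃ c d, ub = .node c d := by
        cases ub with
        | leaf y => simp [BTree.idx] at hnegb; omega
        | node c d => exact ⟨c, d, rfl⟩
      have hxu : (BTree.node u1 u2).idx.natAbs = max u1.minLeaf u2.minLeaf := by
        rw [BTree.idx_node, Int.natAbs_neg, Int.natAbs_natCast]
      have hxb : (BTree.node b1 b2).idx.natAbs = max b1.minLeaf b2.minLeaf := by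
        rw [BTree.idx_node, Int.natAbs_neg, Int.natAbs_natCast]
      have hmaxeq : max b1.minLeaf b2.minLeaf = max u1.minLeaf u2.minLeaf := by
        rw [← hxu, ← hxb, hidx]
      have hCb : {y | y ∈ (BTree.node b1 b2).leafList} ∈ ta.clusters := by
        rw [hclusab]
        exact (BTree.mem_clusters_iff tb _).2 ⟨pb, _, hpb, rfl⟩
      have hCa : {y | y ∈ (BTree.node u1 u2).leafList} ∈ tb.clusters := by
        rw [← hclusab]
        exact (BTree.mem_clusters_iff ta _).2 ⟨pu, _, hpu, rfl⟩
      have hsub1 : {y | y ∈ (BTree.node u1 u2).leafList} ⊆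
          {y | y ∈ (BTree.node b1 b2).leafList} := by
        apply BTree.secondmin_cluster_min ta hnda pu u1 u2 hpu _ hCb
        · rw [← hmaxeq, ← hxb]
          exact BTree.natAbs_idx_mem _
        · refine ⟨(BTree.node b1 b2).minLeaf, BTree.minLeaf_mem _, ?_⟩
          rw [← hmaxeq]
          rw [BTree.minLeaf_node]
          exact BTree.minLeaf_lt_max hnb
      have hsub2 : {y | y ∈ (BTree.node b1 b2).leafList} ⊆
          {y | y ∈ (BTree.node u1 u2).leafList} := by
        apply BTree.secondmin_cluster_min tb hndb pb b1 b2 hpb _ hCa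
        · rw [hmaxeq, ← hxu]
          exact BTree.natAbs_idx_mem _
        · refine ⟨(BTree.node u1 u2).minLeaf, BTree.minLeaf_mem _, ?_⟩
          rw [hmaxeq]
          rw [BTree.minLeaf_node]
          exact BTree.minLeaf_lt_max hnu
      ext y
      simp only [BTree.leafSet, List.mem_toFinset]
      exact ⟨fun h => hsub1 h, fun h => hsub2 h⟩
    · obtain ⟨y, rfl⟩ : ∃ y, u = .leaf y := by
        cases u with
        | leaf y => exact ⟨y, rfl⟩
        | node c d => exact absurd (BTree.idx_node_neg hnu) (not_lt.2 hpos)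
      have hposb : (0:ℤ) ≤ ub.idx := hidx ▸ hpos
      obtain ⟨y', rfl⟩ : ∃ y', ub = .leaf y' := by
        cases ub with
        | leaf y' => exact ⟨y', rfl⟩
        | node c d => exact absurd (BTree.idx_node_neg hnb) (not_lt.2 hposb)
      have h' : (y : ℤ) = (y' : ℤ) := hidx
      have : y = y' := by exact_mod_cast h'
      rw [this]


end OLA
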